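/- arXiv:2006.16398 — 4 statements merged into one kernel-verified Lean document; each statement's English description precedes it below -/
import Mathlib

section
/- (Proposition 1) There are constants C₁, C₂ ≥ 1 such that φ' ∈ WUSC(1, C₁, 2θ₁) and φ ∈ WUSC(2, C₂, 2θ₀), i.e. φ'(λx) ≤ C₁ λ φ'(x) for all λ ≥ 1 and x > 2θ₁, and φ(λx) ≤ C₂ λ² φ(x) for all λ ≥ 1 and x > 2θ₀. Furthermore, if θ₀ = 0 and φ'(0⁺) ≤ 0, then one may take C₁ = C₂ = 1, i.e. φ'(λx) ≤ λ φ'(x) and φ(λx) ≤ λ² φ(x) for all x > 0 and λ ≥ 1. -/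
open MeasureTheory Real Set Filter

noncomputable section

/-- Weak lower scaling property at infinity: `f(l*x) ≥ c * l^τ * f(x)` for `l ≥ 1`, `x > x₁`. -/
def WLSC (f : ℝ → ℝ) (τ c x₁ : ℝ) : Prop :=
  ∀ l : ℝ, 1 ≤ l → ∀ x : ℝ, x₁ < x → c * l ^ τ * f x ≤ f (l * x)

/-- Weak upper scaling property at infinity: `f(l*x) ≤ C * l^τ * f(x)` for `l ≥ 1`, `x > x₁`. -/
def WUSC (f : ℝ → ℝ) (τ C x₁ : ℝ) : Prop :=
  ∀ l : ℝ, 1 ≤ l → ∀ x : ℝ, x₁ < x → f (l * x) ≤ C * l ^ τ * f x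

/-- The Pruitt function `K(r) = σ²/r² + r⁻² ∫_{(0,r)} s² ν(ds)`. -/
def pruittK (σ : ℝ) (ν : Measure ℝ) (r : ℝ) : ℝ :=
  σ ^ 2 / r ^ 2 + (∫ s in Ioo (0:ℝ) r, s ^ 2 ∂ν) / r ^ 2

/-- The Pruitt function `h(r) = σ²/r² + ∫_{(0,∞)} min(1, s²/r²) ν(ds)`. -/
def pruittH (σ : ℝ) (ν : Measure ℝ) (r : ℝ) : ℝ :=
  σ ^ 2 / r ^ 2 + ∫ s in Ioi (0:ℝ), min 1 (s ^ 2 / r ^ 2) ∂ν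

/-- The real part of the characteristic exponent:
`Re ψ(ξ) = σ²ξ² + ∫_{(0,∞)} (1 − cos(ξx)) ν(dx)`. -/
def rePsi (σ : ℝ) (ν : Measure ℝ) (ξ : ℝ) : ℝ :=
  σ ^ 2 * ξ ^ 2 + ∫ x in Ioi (0:ℝ), (1 - Real.cos (ξ * x)) ∂ν

/-- `ψ*(r) = sup_{|z| ≤ r} Re ψ(z)`. -/
def psiStar (σ : ℝ) (ν : Measure ℝ) (r : ℝ) : ℝ :=
  sSup (rePsi σ ν '' {z : ℝ | |z| ≤ r})

/-- `ψ⁻¹(s) = sup{r > 0 : ψ*(r) = s}`. -/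
def psiInv (σ : ℝ) (ν : Measure ℝ) (s : ℝ) : ℝ :=
  sSup {r : ℝ | 0 < r ∧ psiStar σ ν r = s}

/-- `Φ(x) = x² φ''(x)`. -/
def bigPhi (φ'' : ℝ → ℝ) (x : ℝ) : ℝ := x ^ 2 * φ'' x

/-- `Φ*(r) = sup_{0 < s ≤ r} Φ(s)`. -/
def bigPhiStar (φ'' : ℝ → ℝ) (r : ℝ) : ℝ := sSup (bigPhi φ'' '' Ioc (0:ℝ) r)

/-- `Φ⁻¹(s) = sup{r > 0 : Φ*(r) = s}`. -/
def bigPhiInv (φ'' : ℝ → ℝ) (s : ℝ) : ℝ := sSup {r : ℝ | 0 < r ∧ bigPhiStar φ'' r = s}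

/-- The characteristic (Lévy–Khintchine) exponent
`ψ(ξ) = σ²ξ² − ibξ − ∫_{(0,∞)} (e^{iξx} − 1 − iξx 1_{x<1}) ν(dx)`. -/
def charExp (σ b : ℝ) (ν : Measure ℝ) (ξ : ℝ) : ℂ :=
  (σ : ℂ) ^ 2 * (ξ : ℂ) ^ 2 - Complex.I * (b : ℂ) * (ξ : ℂ) -
    ∫ x in Ioi (0:ℝ), (Complex.exp (Complex.I * (ξ : ℂ) * (x : ℂ)) - 1 -
      Complex.I * (ξ : ℂ) * (x : ℂ) * (if x < 1 then (1:ℂ) else 0)) ∂ν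

/-- The holomorphic extension of the Laplace exponent to `{Re z > 0}`. -/
def laplaceC (σ b : ℝ) (ν : Measure ℝ) (z : ℂ) : ℂ :=
  (σ : ℂ) ^ 2 * z ^ 2 - (b : ℂ) * z +
    ∫ x in Ioi (0:ℝ), (Complex.exp (-(z * (x : ℂ))) - 1 +
      z * (x : ℂ) * (if x < 1 then (1:ℂ) else 0)) ∂ν

/-- `b_r = b + ∫_{(0,∞)} s (1_{s<r} − 1_{s<1}) ν(ds)`. -/
def brFn (b : ℝ) (ν : Measure ℝ) (r : ℝ) : ℝ :=
  b + ∫ s in Ioi (0:ℝ), s * ((if s < r then (1:ℝ) else 0) - (if s < 1 then (1:ℝ) else 0)) ∂ν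

/-- The majorant `η`: `η(0) = ∞`, `η(s) = s⁻¹ Φ*(1/s)` for `0 < s < 1/x₀`,
and `η(s) = A s⁻¹ |φ(1/s)|` for `s ≥ 1/x₀`, where `A = Φ*(x₀)/|φ(x₀)|`. -/
def etaFn (φ φ'' : ℝ → ℝ) (x₀ : ℝ) (s : ℝ) : ENNReal :=
  if s ≤ 0 then ⊤
  else if x₀ * s < 1 then ENNReal.ofReal (s⁻¹ * bigPhiStar φ'' s⁻¹)
  else ENNReal.ofReal ((bigPhiStar φ'' x₀ / |φ x₀|) * s⁻¹ * |φ s⁻¹|)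


section auxiliary
open MeasureTheory Real Set Filter

private lemma mvtAux {f f' : ℝ → ℝ} {a b : ℝ} (ha : 0 < a) (hab : a < b)
    (hd : ∀ x, 0 < x → HasDerivAt f (f' x) x) :
    ∃ c, a < c ∧ c < b ∧ f b - f a = (b - a) * f' c := by
  obtain ⟨c, hc, he⟩ := exists_hasDerivAt_eq_slope f f' hab
    (fun x hx => (hd x (lt_of_lt_of_le ha hx.1)).continuousAt.continuousWithinAt)
    (fun x hx => hd x (ha.trans hx.1))
  refine ⟨c, hc.1, hc.2, ?_⟩
  rw [he, mul_div_cancel₀ _ (by linarith : b - a ≠ 0)]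

private lemma sqExpBound {l x : ℝ} (hl : 0 < l) (hx : 0 < x) :
    x ^ 2 * Real.exp (-(l * x)) ≤ 4 / l ^ 2 := by
  have h1 : l * x / 2 ≤ Real.exp (l * x / 2) := by
    have := Real.add_one_le_exp (l * x / 2); linarith
  have h2 : (l * x / 2) ^ 2 ≤ Real.exp (l * x) := by
    have hnn : 0 ≤ l * x / 2 := by positivity
    calc (l * x / 2) ^ 2 ≤ Real.exp (l * x / 2) ^ 2 := by
          exact pow_le_pow_left₀ hnn h1 2
      _ = Real.exp (l * x) := by rw [← Real.exp_nat_mul]; ring_nf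
  have hep : 0 < Real.exp (l * x) := Real.exp_pos _
  have h3 : x ^ 2 ≤ 4 / l ^ 2 * Real.exp (l * x) := by
    rw [← sub_nonneg] at h2 ⊢
    have : 4 / l ^ 2 * Real.exp (l * x) - x ^ 2 =
        (4 / l ^ 2) * (Real.exp (l * x) - (l * x / 2) ^ 2) := by field_simp; ring
    rw [this]; positivity
  rw [Real.exp_neg]
  calc x ^ 2 * (Real.exp (l * x))⁻¹ ≤ (4 / l ^ 2 * Real.exp (l * x)) * (Real.exp (l * x))⁻¹ := by
        gcongr
    _ = 4 / l ^ 2 := by field_simp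

private lemma minIntegrable (ν : Measure ℝ)
    (hint : ∫⁻ x in Ioi (0:ℝ), ENNReal.ofReal (min 1 (x ^ 2)) ∂ν ≠ ⊤) :
    IntegrableOn (fun x => min 1 (x ^ 2)) (Ioi 0) ν := by
  constructor
  · exact (continuous_const.min (continuous_pow 2)).aestronglyMeasurable
  · rw [hasFiniteIntegral_iff_ofReal]
    · exact lt_top_iff_ne_top.2 hint
    · filter_upwards with x
      have : (0:ℝ) ≤ x ^ 2 := sq_nonneg x
      simp [le_min_iff]; positivity

private lemma expIntegrable (ν : Measure ℝ)
    (hint : ∫⁻ x in Ioi (0:ℝ), ENNReal.ofReal (min 1 (x ^ 2)) ∂ν ≠ ⊤)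
    {l : ℝ} (hl : 0 < l) :
    IntegrableOn (fun x => x ^ 2 * Real.exp (-(l * x))) (Ioi 0) ν := by
  have hC : (0:ℝ) ≤ max (4 / l ^ 2) 1 := le_trans zero_le_one (le_max_right _ _)
  refine Integrable.mono ((minIntegrable ν hint).const_mul (max (4 / l ^ 2) 1)) ?_ ?_
  · exact (((continuous_pow 2).mul
      ((continuous_const.mul continuous_id).neg.rexp)).aestronglyMeasurable)
  · rw [ae_restrict_iff' measurableSet_Ioi]
    filter_upwards with x hx
    have hx0 : 0 < x := hx
    have hnn : 0 ≤ x ^ 2 * Real.exp (-(l * x)) := by positivity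
    rw [Real.norm_eq_abs, Real.norm_eq_abs, abs_of_nonneg hnn, abs_of_nonneg]
    · rcases le_or_gt x 1 with h | h
      · have hmin : min 1 (x ^ 2) = x ^ 2 := min_eq_right (by nlinarith)
        rw [hmin]
        calc x ^ 2 * Real.exp (-(l * x)) ≤ x ^ 2 * 1 := by
              have : Real.exp (-(l * x)) ≤ 1 := by
                rw [Real.exp_le_one_iff]; nlinarith
              nlinarith [sq_nonneg x]
          _ = x ^ 2 := mul_one _
          _ ≤ max (4 / l ^ 2) 1 * x ^ 2 := by nlinarith [le_max_right (4 / l ^ 2) (1:ℝ)]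
      · have hmin : min 1 (x ^ 2) = 1 := min_eq_left (by nlinarith)
        rw [hmin, mul_one]
        exact le_trans (sqExpBound hl hx0) (le_max_left _ _)
    · have : (0:ℝ) ≤ min 1 (x ^ 2) := le_min zero_le_one (sq_nonneg x)
      positivity

private lemma nuIocFinite (ν : Measure ℝ)
    (hint : ∫⁻ x in Ioi (0:ℝ), ENNReal.ofReal (min 1 (x ^ 2)) ∂ν ≠ ⊤)
    {a b : ℝ} (ha : 0 < a) : ν (Ioc a b) < ⊤ := by
  by_contra h
  push_neg at h
  have htop : ν (Ioc a b) = ⊤ := top_le_iff.1 h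
  have hc : (0:ℝ) < min 1 (a ^ 2) := lt_min one_pos (by positivity)
  have h1 : ∫⁻ x in Ioc a b, ENNReal.ofReal (min 1 (a ^ 2)) ∂ν ≤
      ∫⁻ x in Ioc a b, ENNReal.ofReal (min 1 (x ^ 2)) ∂ν := by
    refine setLIntegral_mono' measurableSet_Ioc fun x hx => ?_
    refine ENNReal.ofReal_le_ofReal (le_min (min_le_left _ _) ?_)
    exact le_trans (min_le_right _ _) (by nlinarith [hx.1, ha])
  have h2 : ∫⁻ x in Ioc a b, ENNReal.ofReal (min 1 (x ^ 2)) ∂ν ≤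
      ∫⁻ x in Ioi 0, ENNReal.ofReal (min 1 (x ^ 2)) ∂ν :=
    lintegral_mono_set (fun x hx => ha.trans hx.1)
  rw [setLIntegral_const, htop, ENNReal.mul_top (ENNReal.ofReal_pos.2 hc).ne'] at h1
  exact hint (top_le_iff.1 (le_trans h1 h2))

private lemma lintIocFinite (ν : Measure ℝ)
    (hint : ∫⁻ x in Ioi (0:ℝ), ENNReal.ofReal (min 1 (x ^ 2)) ∂ν ≠ ⊤)
    {a b : ℝ} (ha : 0 < a) :
    ∫⁻ x in Ioc a b, ENNReal.ofReal x ∂ν < ⊤ := by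
  calc ∫⁻ x in Ioc a b, ENNReal.ofReal x ∂ν ≤ ∫⁻ _ in Ioc a b, ENNReal.ofReal b ∂ν :=
        setLIntegral_mono' measurableSet_Ioc fun x hx => ENNReal.ofReal_le_ofReal hx.2
    _ = ENNReal.ofReal b * ν (Ioc a b) := setLIntegral_const _ _
    _ < ⊤ := ENNReal.mul_lt_top ENNReal.ofReal_lt_top (nuIocFinite ν hint ha)

private lemma bigSup (ν : Measure ℝ)
    (hint : ∫⁻ x in Ioi (0:ℝ), ENNReal.ofReal (min 1 (x ^ 2)) ∂ν ≠ ⊤)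
    (hUV2 : ∫⁻ x in Ioo (0:ℝ) 1, ENNReal.ofReal x ∂ν = ⊤) (M : ℝ) :
    ∃ N : ℕ, M < (∫⁻ x in Ioc ((2:ℝ)⁻¹ ^ (N + 1)) 2⁻¹, ENNReal.ofReal x ∂ν).toReal := by
  set f : ℝ → ENNReal := fun x => ENNReal.ofReal x with hf
  set A : ℕ → Set ℝ := fun N => Ioc ((2:ℝ)⁻¹ ^ (N + 1)) 2⁻¹ with hA
  have hsplit : Ioo (0:ℝ) 1 = Ioc (0:ℝ) 2⁻¹ ∪ Ioo (2:ℝ)⁻¹ 1 := by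
    ext x
    simp only [mem_Ioo, mem_union, mem_Ioc]
    constructor
    · rintro ⟨h1, h2⟩
      rcases le_or_gt x 2⁻¹ with h | h
      · exact Or.inl ⟨h1, h⟩
      · exact Or.inr ⟨h, h2⟩
    · rintro (⟨h1, h2⟩ | ⟨h1, h2⟩)
      · exact ⟨h1, lt_of_le_of_lt h2 (by norm_num)⟩
      · exact ⟨lt_trans (by norm_num) h1, h2⟩
  have hdisj : Disjoint (Ioc (0:ℝ) 2⁻¹) (Ioo (2:ℝ)⁻¹ 1) := by
    rw [Set.disjoint_left]
    rintro x ⟨_, h2⟩ ⟨h3, _⟩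
    exact absurd h3 (not_lt.2 h2)
  have hIoc : ∫⁻ x in Ioc (0:ℝ) 2⁻¹, f x ∂ν = ⊤ := by
    by_contra h
    have hfin2 : ∫⁻ x in Ioo (2:ℝ)⁻¹ 1, f x ∂ν < ⊤ := by
      refine lt_of_le_of_lt (lintegral_mono_set (fun x hx => ?_) :
        _ ≤ ∫⁻ x in Ioc (2:ℝ)⁻¹ 1, f x ∂ν) (lintIocFinite ν hint (by norm_num))
      exact ⟨hx.1, hx.2.le⟩
    rw [hsplit, lintegral_union measurableSet_Ioo hdisj] at hUV2
    exact (ENNReal.add_lt_top.2 ⟨lt_top_iff_ne_top.2 h, hfin2⟩).ne hUV2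
  have hmeas : ∀ N : ℕ, Measurable ((A N).indicator f) :=
    fun N => (ENNReal.measurable_ofReal.comp measurable_id).indicator measurableSet_Ioc
  have hmono : Monotone fun N => (A N).indicator f := by
    intro N M' hNM
    refine Set.indicator_le_indicator_of_subset ?_ (fun x => zero_le)
    refine Ioc_subset_Ioc_left ?_
    exact pow_le_pow_of_le_one (by norm_num) (by norm_num) (by omega)
  have hsup : (fun x => ⨆ N, (A N).indicator f x) = (Ioc (0:ℝ) 2⁻¹).indicator f := by
    funext x
    by_cases hx : x ∈ Ioc (0:ℝ) 2⁻¹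
    · rw [Set.indicator_of_mem hx]
      refine le_antisymm (iSup_le fun N => ?_) ?_
      · by_cases hxN : x ∈ A N
        · rw [Set.indicator_of_mem hxN]
        · rw [Set.indicator_of_notMem hxN]; exact zero_le
      · obtain ⟨n, hn⟩ := exists_pow_lt_of_lt_one hx.1 (by norm_num : (2:ℝ)⁻¹ < 1)
        have hxA : x ∈ A n := by
          refine ⟨lt_of_le_of_lt ?_ hn, hx.2⟩
          exact pow_le_pow_of_le_one (by norm_num) (by norm_num) (by omega)
        exact le_trans (le_of_eq (Set.indicator_of_mem hxA f).symm)
          (le_iSup (fun N => (A N).indicator f x) n)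
    · rw [Set.indicator_of_notMem hx]
      refine le_antisymm (iSup_le fun N => ?_) zero_le
      rw [Set.indicator_of_notMem]
      intro hxN
      exact hx ⟨lt_of_le_of_lt (by positivity) hxN.1, hxN.2⟩
  have hlim : ⨆ N, ∫⁻ x in A N, f x ∂ν = ⊤ := by
    have h := lintegral_iSup hmeas hmono (μ := ν)
    rw [hsup] at h
    simp_rw [show ∀ N, ∫⁻ x, (A N).indicator f x ∂ν = ∫⁻ x in A N, f x ∂ν from
      fun N => lintegral_indicator measurableSet_Ioc _] at h
    rw [← h, lintegral_indicator measurableSet_Ioc, hIoc]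
  have h0 : ENNReal.ofReal (max M 0) < ⨆ N, ∫⁻ x in A N, f x ∂ν := by
    rw [hlim]; exact ENNReal.ofReal_lt_top
  obtain ⟨N, hN⟩ := lt_iSup_iff.1 h0
  refine ⟨N, ?_⟩
  have hfin : ∫⁻ x in A N, f x ∂ν ≠ ⊤ := (lintIocFinite ν hint (by positivity)).ne
  have := (ENNReal.ofReal_lt_iff_lt_toReal (le_max_right M 0) hfin).1 hN
  exact lt_of_le_of_lt (le_max_left M 0) this

end auxiliary


set_option maxHeartbeats 1000000 in
/-- Proposition 1. -/
theorem statement0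
    (ν : Measure ℝ) [SigmaFinite ν]
    (hint : ∫⁻ x in Ioi (0:ℝ), ENNReal.ofReal (min 1 (x ^ 2)) ∂ν ≠ ⊤)
    (σ b : ℝ) (hσ : 0 ≤ σ)
    (φ φ' φ'' : ℝ → ℝ)
    (hφ : ∀ l : ℝ, 0 ≤ l → φ l = σ ^ 2 * l ^ 2 - b * l +
      ∫ x in Ioi (0:ℝ), (Real.exp (-(l * x)) - 1 + l * x * (if x < 1 then 1 else 0)) ∂ν)
    (hD1 : ∀ x : ℝ, 0 < x → HasDerivAt φ (φ' x) x)
    (hD2 : ∀ x : ℝ, 0 < x → HasDerivAt φ' (φ'' x) x)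
    (hφ'' : ∀ l : ℝ, 0 < l → φ'' l = 2 * σ ^ 2 + ∫ x in Ioi (0:ℝ), x ^ 2 * Real.exp (-(l * x)) ∂ν)
    (hUV : 0 < σ ∨ ∫⁻ x in Ioo (0:ℝ) 1, ENNReal.ofReal x ∂ν = ⊤)
    (θ₀ θ₁ : ℝ)
    (hθ₀ : IsGreatest {s : ℝ | 0 ≤ s ∧ φ s = 0} θ₀)
    (hθ₁ : θ₁ = sInf {s : ℝ | 0 < s ∧ 0 < φ' s})
    :
    (∃ C₁ : ℝ, 1 ≤ C₁ ∧ WUSC φ' 1 C₁ (2 * θ₁)) ∧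
    (∃ C₂ : ℝ, 1 ≤ C₂ ∧ WUSC φ 2 C₂ (2 * θ₀)) ∧
    ((θ₀ = 0 ∧ (∀ ε : ℝ, 0 < ε → ∃ x : ℝ, 0 < x ∧ φ' x < ε)) →
      ∀ x : ℝ, 0 < x → ∀ l : ℝ, 1 ≤ l →
        φ' (l * x) ≤ l * φ' x ∧ φ (l * x) ≤ l ^ 2 * φ x) := by
  -- nonnegativity of φ''
  have hφ''nonneg : ∀ l : ℝ, 0 < l → 0 ≤ φ'' l := by
    intro l hl
    rw [hφ'' l hl]
    have h0 : 0 ≤ ∫ x in Ioi (0:ℝ), x ^ 2 * Real.exp (-(l * x)) ∂ν :=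
      setIntegral_nonneg measurableSet_Ioi fun x _ => by positivity
    positivity
  -- φ'' is antitone on (0, ∞)
  have hφ''anti : ∀ a b : ℝ, 0 < a → a ≤ b → φ'' b ≤ φ'' a := by
    intro a b' ha hab
    have hb : 0 < b' := lt_of_lt_of_le ha hab
    rw [hφ'' a ha, hφ'' b' hb]
    have : ∫ x in Ioi (0:ℝ), x ^ 2 * Real.exp (-(b' * x)) ∂ν ≤
        ∫ x in Ioi (0:ℝ), x ^ 2 * Real.exp (-(a * x)) ∂ν := by
      refine setIntegral_mono_on (expIntegrable ν hint hb) (expIntegrable ν hint ha)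
        measurableSet_Ioi fun x hx => ?_
      have hx0 : (0:ℝ) < x := hx
      have hee : Real.exp (-(b' * x)) ≤ Real.exp (-(a * x)) := by
        apply Real.exp_le_exp.2
        have := mul_le_mul_of_nonneg_right hab hx0.le
        linarith
      exact mul_le_mul_of_nonneg_left hee (sq_nonneg x)
    linarith
  -- φ' is monotone on (0, ∞)
  have hmono : ∀ a b : ℝ, 0 < a → a ≤ b → φ' a ≤ φ' b := by
    intro a b' ha hab
    rcases hab.lt_or_eq with h | h
    · obtain ⟨c, hc1, hc2, hce⟩ := mvtAux ha h hD2
      have := mul_nonneg (by linarith : (0:ℝ) ≤ b' - a) (hφ''nonneg c (ha.trans hc1))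
      linarith
    · rw [h]
  -- φ' is eventually large
  have hbig : ∀ M : ℝ, ∃ T : ℝ, 1 < T ∧ M < φ' T := by
    intro M
    rcases hUV with hσ0 | hν
    · set T := 1 + (|M| + |φ' 1| + 1) / (2 * σ ^ 2) with hT
      have hσ2 : 0 < 2 * σ ^ 2 := by positivity
      have hq : 0 < (|M| + |φ' 1| + 1) / (2 * σ ^ 2) := by positivity
      have hT1 : 1 < T := by rw [hT]; linarith
      obtain ⟨c, hc1, hc2, hce⟩ := mvtAux one_pos hT1 hD2
      have h'' : 2 * σ ^ 2 ≤ φ'' c := by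
        rw [hφ'' c (lt_trans one_pos hc1)]
        have h0 : 0 ≤ ∫ x in Ioi (0:ℝ), x ^ 2 * Real.exp (-(c * x)) ∂ν :=
          setIntegral_nonneg measurableSet_Ioi fun x _ => by positivity
        linarith
      have hTT : (T - 1) * (2 * σ ^ 2) = |M| + |φ' 1| + 1 := by
        rw [hT]; field_simp; ring
      refine ⟨T, hT1, ?_⟩
      have h1 : (T - 1) * (2 * σ ^ 2) ≤ (T - 1) * φ'' c :=
        mul_le_mul_of_nonneg_left h'' (by linarith)
      have h2 : M ≤ |M| := le_abs_self M
      have h3 : -|φ' 1| ≤ φ' 1 := neg_abs_le _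
      linarith
    · set c₀ := Real.exp (-2) / 4 with hc₀
      have hc₀pos : 0 < c₀ := by rw [hc₀]; positivity
      have key : ∀ N : ℕ, φ' 2 + c₀ *
          (∫⁻ x in Ioc ((2:ℝ)⁻¹ ^ (N + 1)) 2⁻¹, ENNReal.ofReal x ∂ν).toReal
          ≤ φ' ((2:ℝ) ^ (N + 1)) := by
        intro N
        induction N with
        | zero => simp [Ioc_self]
        | succ N ih =>
          set p := (2:ℝ) ^ (N + 1) with hp'
          have hp : 0 < p := by positivity
          have hps : p < 2 * p := by linarith
          set q := (2:ℝ)⁻¹ ^ (N + 1 + 1) with hq'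
          have hq : 0 < q := by positivity
          set I := Ioc q ((2:ℝ)⁻¹ ^ (N + 1)) with hI'
          have hqlt : q < (2:ℝ)⁻¹ ^ (N + 1) := by
            rw [hq']
            apply pow_lt_pow_right_of_lt_one₀ (by norm_num) (by norm_num) (by omega)
          have hIsub : I ⊆ Ioi (0:ℝ) := fun x hx => hq.trans hx.1
          have hνI : ν I < ⊤ := nuIocFinite ν hint hq
          obtain ⟨c, hc1, hc2, hce⟩ := mvtAux hp hps hD2
          have h2p : (2:ℝ) * p = (2:ℝ) ^ (N + 1 + 1) := by rw [hp']; ring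
          have hφ''c : φ'' (2 * p) ≤ φ'' c := hφ''anti c (2 * p) (hp.trans hc1) hc2.le
          have h2ppos : (0:ℝ) < 2 * p := by linarith
          -- lower bound for φ'' (2p)
          have hlow : q ^ 2 * Real.exp (-2) * (ν I).toReal ≤ φ'' (2 * p) := by
            rw [hφ'' (2 * p) h2ppos]
            have hInt1 : ∫ x in I, x ^ 2 * Real.exp (-(2 * p * x)) ∂ν ≤
                ∫ x in Ioi (0:ℝ), x ^ 2 * Real.exp (-(2 * p * x)) ∂ν := by
              refine setIntegral_mono_set (expIntegrable ν hint h2ppos) ?_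
                (HasSubset.Subset.eventuallyLE hIsub)
              filter_upwards with x using by positivity
            have hInt2 : q ^ 2 * Real.exp (-2) * (ν I).toReal ≤
                ∫ x in I, x ^ 2 * Real.exp (-(2 * p * x)) ∂ν := by
              have hconst : ∫ _ in I, q ^ 2 * Real.exp (-2) ∂ν
                  = (ν I).toReal • (q ^ 2 * Real.exp (-2)) := setIntegral_const _
              have hmon : ∫ _ in I, q ^ 2 * Real.exp (-2) ∂ν ≤
                  ∫ x in I, x ^ 2 * Real.exp (-(2 * p * x)) ∂ν := by
                refine setIntegral_mono_on (integrableOn_const hνI.ne)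
                  ((expIntegrable ν hint h2ppos).mono_set hIsub) measurableSet_Ioc
                  fun x hx => ?_
                have hx1 : q < x := hx.1
                have hx2 : x ≤ (2:ℝ)⁻¹ ^ (N + 1) := hx.2
                have hxq : q ^ 2 ≤ x ^ 2 := pow_le_pow_left₀ hq.le hx1.le 2
                have hex : Real.exp (-2) ≤ Real.exp (-(2 * p * x)) := by
                  apply Real.exp_le_exp.2
                  have hb2 : 2 * p * x ≤ 2 := by
                    have hpx : p * x ≤ p * (2:ℝ)⁻¹ ^ (N + 1) :=
                      mul_le_mul_of_nonneg_left hx2 hp.le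
                    have hpq : p * (2:ℝ)⁻¹ ^ (N + 1) = 1 := by
                      rw [hp', inv_pow, mul_inv_eq_one₀ (by positivity)]
                    nlinarith
                  linarith
                exact mul_le_mul hxq hex (Real.exp_pos _).le (sq_nonneg x)
              rw [hconst, smul_eq_mul] at hmon
              nlinarith [hmon]
            have h0 : 0 ≤ ∫ x in Ioi (0:ℝ), x ^ 2 * Real.exp (-(2 * p * x)) ∂ν :=
              setIntegral_nonneg measurableSet_Ioi fun x _ => by positivity
            linarith [le_trans hInt2 hInt1, sq_nonneg σ]
          -- lintegral over I bounded via the measure of I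
          have hlintI : (∫⁻ x in I, ENNReal.ofReal x ∂ν).toReal ≤
              (2:ℝ)⁻¹ ^ (N + 1) * (ν I).toReal := by
            have h1 : ∫⁻ x in I, ENNReal.ofReal x ∂ν ≤
                ENNReal.ofReal ((2:ℝ)⁻¹ ^ (N + 1)) * ν I := by
              calc ∫⁻ x in I, ENNReal.ofReal x ∂ν ≤
                  ∫⁻ _ in I, ENNReal.ofReal ((2:ℝ)⁻¹ ^ (N + 1)) ∂ν :=
                    setLIntegral_mono' measurableSet_Ioc fun x hx =>
                      ENNReal.ofReal_le_ofReal hx.2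
                _ = ENNReal.ofReal ((2:ℝ)⁻¹ ^ (N + 1)) * ν I := setLIntegral_const _ _
            have h2 := ENNReal.toReal_mono
              (ENNReal.mul_ne_top ENNReal.ofReal_ne_top hνI.ne) h1
            rw [ENNReal.toReal_mul, ENNReal.toReal_ofReal (by positivity)] at h2
            exact h2
          -- additivity of the lower integrals
          have hle21 : (2:ℝ)⁻¹ ^ (N + 1) ≤ 2⁻¹ := by
            calc (2:ℝ)⁻¹ ^ (N + 1) ≤ (2:ℝ)⁻¹ ^ 1 :=
                  pow_le_pow_of_le_one (by norm_num) (by norm_num) (by omega)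
              _ = 2⁻¹ := pow_one _
          have hunion : Ioc ((2:ℝ)⁻¹ ^ (N + 1 + 1)) 2⁻¹ =
              I ∪ Ioc ((2:ℝ)⁻¹ ^ (N + 1)) 2⁻¹ := by
            rw [hI', ← hq']
            exact (Set.Ioc_union_Ioc_eq_Ioc hqlt.le hle21).symm
          have hBsum : (∫⁻ x in Ioc ((2:ℝ)⁻¹ ^ (N + 1 + 1)) 2⁻¹, ENNReal.ofReal x ∂ν).toReal
              = (∫⁻ x in I, ENNReal.ofReal x ∂ν).toReal +
                (∫⁻ x in Ioc ((2:ℝ)⁻¹ ^ (N + 1)) 2⁻¹, ENNReal.ofReal x ∂ν).toReal := by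
            rw [hunion, lintegral_union measurableSet_Ioc (Set.Ioc_disjoint_Ioc_of_le le_rfl),
              ENNReal.toReal_add (lintIocFinite ν hint hq).ne
                (lintIocFinite ν hint (by positivity)).ne]
          -- the step inequality
          have hstep : φ' p + p * (q ^ 2 * Real.exp (-2) * (ν I).toReal) ≤ φ' (2 * p) := by
            linarith [hce, mul_le_mul_of_nonneg_left (le_trans hlow hφ''c) hp.le]
          have hone : (2:ℝ) ^ (N + 1) * (2:ℝ)⁻¹ ^ (N + 1) = 1 := by
            rw [← mul_pow]; norm_num
          have hpq2 : p * (q ^ 2 * Real.exp (-2)) = c₀ * (2:ℝ)⁻¹ ^ (N + 1) := by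
            rw [hp', hq', hc₀, pow_succ]
            linear_combination (Real.exp (-2) * (2:ℝ)⁻¹ ^ (N + 1) / 4) * hone
          have harith : c₀ * (∫⁻ x in I, ENNReal.ofReal x ∂ν).toReal ≤
              p * (q ^ 2 * Real.exp (-2) * (ν I).toReal) := by
            calc c₀ * (∫⁻ x in I, ENNReal.ofReal x ∂ν).toReal ≤
                c₀ * ((2:ℝ)⁻¹ ^ (N + 1) * (ν I).toReal) :=
                  mul_le_mul_of_nonneg_left hlintI hc₀pos.le
              _ = p * (q ^ 2 * Real.exp (-2) * (ν I).toReal) := by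
                  linear_combination (-(ν I).toReal) * hpq2
          calc φ' 2 + c₀ * (∫⁻ x in Ioc ((2:ℝ)⁻¹ ^ (N + 1 + 1)) 2⁻¹,
                ENNReal.ofReal x ∂ν).toReal
              = (φ' 2 + c₀ * (∫⁻ x in Ioc ((2:ℝ)⁻¹ ^ (N + 1)) 2⁻¹,
                  ENNReal.ofReal x ∂ν).toReal) +
                c₀ * (∫⁻ x in I, ENNReal.ofReal x ∂ν).toReal := by rw [hBsum]; ring
            _ ≤ φ' p + c₀ * (∫⁻ x in I, ENNReal.ofReal x ∂ν).toReal := by linarith [ih]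
            _ ≤ φ' p + p * (q ^ 2 * Real.exp (-2) * (ν I).toReal) := by linarith [harith]
            _ ≤ φ' (2 * p) := hstep
            _ = φ' ((2:ℝ) ^ (N + 1 + 1)) := by rw [h2p]
      obtain ⟨N, hN⟩ := bigSup ν hint hν ((M - φ' 2) / c₀)
      refine ⟨(2:ℝ) ^ (N + 1), ?_, ?_⟩
      · have h2N : (2:ℝ) ≤ 2 ^ (N + 1) := le_self_pow₀ (by norm_num) (Nat.succ_ne_zero N)
        linarith
      · have hKey := key N
        rw [div_lt_iff₀ hc₀pos] at hN
        nlinarith [hKey, hN]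
  -- small values of φ near 0
  obtain ⟨Cs, hCs0, hsmall⟩ : ∃ Cs : ℝ, 0 ≤ Cs ∧ ∀ l : ℝ, 0 < l → l ≤ 1 → φ l ≤ Cs * l := by
    set K := ∫ x in Ioi (0:ℝ), (if x < 1 then x ^ 2 else 0) ∂ν with hK
    have hKmeas : Measurable fun x : ℝ => if x < 1 then x ^ 2 else (0:ℝ) :=
      Measurable.ite measurableSet_Iio (measurable_id.pow_const 2) measurable_const
    have hKint : IntegrableOn (fun x => if x < 1 then x ^ 2 else (0:ℝ)) (Ioi 0) ν := by
      refine Integrable.mono (minIntegrable ν hint) hKmeas.aestronglyMeasurable ?_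
      rw [ae_restrict_iff' measurableSet_Ioi]
      filter_upwards with x hx
      have hx0 : (0:ℝ) < x := hx
      have hmn : (0:ℝ) ≤ min 1 (x ^ 2) := le_min zero_le_one (sq_nonneg x)
      rw [Real.norm_eq_abs, Real.norm_eq_abs, abs_of_nonneg hmn]
      rcases lt_or_ge x 1 with h | h
      · rw [if_pos h, abs_of_nonneg (sq_nonneg x)]
        exact le_min (by nlinarith) le_rfl
      · rw [if_neg (not_lt.2 h)]
        simpa using hmn
    have hK0 : 0 ≤ K := by
      refine setIntegral_nonneg measurableSet_Ioi fun x _ => ?_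
      by_cases h : x < 1 <;> simp [h, sq_nonneg]
    refine ⟨σ ^ 2 + |b| + K, by positivity, ?_⟩
    intro l hl hl1
    rw [hφ l hl.le]
    have hfint : IntegrableOn
        (fun x => Real.exp (-(l * x)) - 1 + l * x * (if x < 1 then 1 else 0)) (Ioi 0) ν := by
      refine Integrable.mono (minIntegrable ν hint) ?_ ?_
      · have hm : Measurable fun x : ℝ =>
            Real.exp (-(l * x)) - 1 + l * x * (if x < 1 then 1 else 0) := by
          apply Measurable.add
          · exact (Real.measurable_exp.comp ((measurable_const.mul measurable_id).neg)).sub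
              measurable_const
          · exact (measurable_const.mul measurable_id).mul
              (Measurable.ite measurableSet_Iio measurable_const measurable_const)
        exact hm.aestronglyMeasurable
      · rw [ae_restrict_iff' measurableSet_Ioi]
        filter_upwards with x hx
        have hx0 : 0 < x := hx
        have hmn : (0:ℝ) ≤ min 1 (x ^ 2) := le_min zero_le_one (sq_nonneg x)
        rw [Real.norm_eq_abs, Real.norm_eq_abs, abs_of_nonneg hmn]
        rcases lt_or_ge x 1 with h | h
        · rw [if_pos h, mul_one]
          have harg : |(-(l * x))| ≤ 1 := by
            rw [abs_of_nonpos (by nlinarith)]; nlinarith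
          have habs := Real.abs_exp_sub_one_sub_id_le harg
          have hmin : min 1 (x ^ 2) = x ^ 2 := min_eq_right (by nlinarith)
          rw [hmin]
          have h2 : (-(l * x)) ^ 2 ≤ x ^ 2 := by
            nlinarith [mul_nonneg (mul_nonneg hl.le (by linarith : (0:ℝ) ≤ 1 - l))
              (sq_nonneg x)]
          calc |Real.exp (-(l * x)) - 1 + l * x|
              = |Real.exp (-(l * x)) - 1 - (-(l * x))| := by ring_nf
            _ ≤ (-(l * x)) ^ 2 := habs
            _ ≤ x ^ 2 := h2
        · rw [if_neg (not_lt.2 h), mul_zero, add_zero]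
          have hmin : min 1 (x ^ 2) = 1 := min_eq_left (by nlinarith)
          rw [hmin, abs_le]
          constructor
          · nlinarith [Real.exp_pos (-(l * x))]
          · have he1 : Real.exp (-(l * x)) ≤ 1 := by
              rw [Real.exp_le_one_iff]; nlinarith
            linarith
    have hintle : ∫ x in Ioi (0:ℝ),
          (Real.exp (-(l * x)) - 1 + l * x * (if x < 1 then 1 else 0)) ∂ν
        ≤ ∫ x in Ioi (0:ℝ), l * (if x < 1 then x ^ 2 else 0) ∂ν := by
      refine setIntegral_mono_on hfint (hKint.const_mul l) measurableSet_Ioi fun x hx => ?_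
      have hx0 : (0:ℝ) < x := hx
      rcases lt_or_ge x 1 with h | h
      · rw [if_pos h, if_pos h, mul_one]
        have harg : |(-(l * x))| ≤ 1 := by
          rw [abs_of_nonpos (by nlinarith)]; nlinarith
        have habs := Real.abs_exp_sub_one_sub_id_le harg
        have h2 : Real.exp (-(l * x)) - 1 - (-(l * x)) ≤ (-(l * x)) ^ 2 :=
          le_trans (le_abs_self _) habs
        nlinarith [mul_nonneg (mul_nonneg hl.le (by linarith : (0:ℝ) ≤ 1 - l))
          (sq_nonneg x)]
      · rw [if_neg (not_lt.2 h), if_neg (not_lt.2 h), mul_zero, add_zero, mul_zero]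
        have he1 : Real.exp (-(l * x)) ≤ 1 := by
          rw [Real.exp_le_one_iff]; nlinarith
        linarith
    have hgl : ∫ x in Ioi (0:ℝ), l * (if x < 1 then x ^ 2 else 0) ∂ν = l * K := by
      rw [hK, ← integral_const_mul]
    rw [hgl] at hintle
    have hσl : σ ^ 2 * l ^ 2 ≤ σ ^ 2 * l := by
      nlinarith [mul_nonneg (mul_nonneg (sq_nonneg σ) hl.le) (by linarith : (0:ℝ) ≤ 1 - l)]
    have hbl : -(b * l) ≤ |b| * l := by
      nlinarith [mul_nonneg (by linarith [neg_abs_le b] : (0:ℝ) ≤ |b| + b) hl.le]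
    linarith
  -- continuity of φ on compact subintervals of (0, ∞)
  have hcont : ∀ a b' : ℝ, 0 < a → ContinuousOn φ (Icc a b') := fun a b' ha =>
    fun x hx => (hD1 x (lt_of_lt_of_le ha hx.1)).continuousAt.continuousWithinAt
  have hθ₀0 : 0 ≤ θ₀ := hθ₀.1.1
  -- φ is eventually positive
  have hYex : ∃ Y : ℝ, θ₀ < Y ∧ 0 < φ Y := by
    obtain ⟨T, hT1, hT2⟩ := hbig 1
    set y₀ := max T (θ₀ + 1) with hy₀
    have hy₀T : T ≤ y₀ := le_max_left _ _
    have hy₀pos : 0 < y₀ := lt_trans one_pos (lt_of_lt_of_le hT1 hy₀T)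
    set Y := y₀ + |φ y₀| + 1 with hY
    have hyY : y₀ < Y := by
      rw [hY]; linarith [abs_nonneg (φ y₀)]
    obtain ⟨c, hc1, hc2, hce⟩ := mvtAux hy₀pos hyY hD1
    have hTc : 0 < T := lt_trans one_pos hT1
    have hφ'c : 1 ≤ φ' c := le_trans hT2.le (hmono T c hTc (by linarith))
    refine ⟨Y, ?_, ?_⟩
    · have h1 : θ₀ + 1 ≤ y₀ := le_max_right _ _
      linarith
    · have h1 : Y - y₀ = |φ y₀| + 1 := by rw [hY]; ring
      rw [h1] at hce
      have h2 : (|φ y₀| + 1) * 1 ≤ (|φ y₀| + 1) * φ' c :=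
        mul_le_mul_of_nonneg_left hφ'c (by positivity)
      linarith [neg_abs_le (φ y₀), hce, h2]
  -- φ is positive beyond θ₀
  have hpos : ∀ s, θ₀ < s → 0 < φ s := by
    intro s hs
    have hs0 : 0 < s := lt_of_le_of_lt hθ₀0 hs
    rcases lt_trichotomy (φ s) 0 with h | h | h
    · exfalso
      obtain ⟨Y, hY1, hY2⟩ := hYex
      have hsY : s ≠ Y := fun he => by rw [he] at h; linarith
      rcases lt_or_gt_of_ne hsY with hlt | hgt
      · obtain ⟨c, hc, hc0⟩ := intermediate_value_Ioo hlt.le (hcont s Y hs0) ⟨h, hY2⟩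
        have := hθ₀.2 ⟨le_of_lt (hs0.trans hc.1), hc0⟩
        linarith [hc.1]
      · have hY0 : 0 < Y := lt_of_le_of_lt hθ₀0 hY1
        obtain ⟨c, hc, hc0⟩ := intermediate_value_Ioo' hgt.le (hcont Y s hY0) ⟨h, hY2⟩
        have := hθ₀.2 ⟨le_of_lt (hY0.trans hc.1), hc0⟩
        linarith [hc.1, hY1]
    · exfalso
      have := hθ₀.2 ⟨hs0.le, h⟩
      linarith
    · exact h
  -- φ' is positive beyond θ₀
  have hder_pos : ∀ s, θ₀ < s → 0 < φ' s := by
    intro s hs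
    have hs0 : 0 < s := lt_of_le_of_lt hθ₀0 hs
    rcases eq_or_lt_of_le hθ₀0 with h0 | h0
    · by_contra hneg
      push_neg at hneg
      have hφs : 0 < φ s := hpos s hs
      have hCs1 : 0 < Cs + 1 := by linarith
      set u := min s (min 1 (φ s / (Cs + 1))) with hu
      have hu0 : 0 < u := lt_min hs0 (lt_min one_pos (by positivity))
      have hu1 : u ≤ 1 := le_trans (min_le_right _ _) (min_le_left _ _)
      have hus : u ≤ s := min_le_left _ _
      have huC : u ≤ φ s / (Cs + 1) := le_trans (min_le_right _ _) (min_le_right _ _)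
      have h1 : φ s ≤ φ u := by
        rcases hus.lt_or_eq with h | h
        · obtain ⟨c, hc1, hc2, hce⟩ := mvtAux hu0 h hD1
          have hmc : φ' c ≤ φ' s := hmono c s (hu0.trans hc1) hc2.le
          nlinarith [mul_nonneg (by linarith : (0:ℝ) ≤ s - u)
            (by linarith : (0:ℝ) ≤ -(φ' c))]
        · rw [h]
      have h2 : φ u ≤ Cs * u := hsmall u hu0 hu1
      have h3 : Cs * u ≤ Cs * (φ s / (Cs + 1)) := mul_le_mul_of_nonneg_left huC hCs0
      have h4 : Cs * (φ s / (Cs + 1)) < φ s := by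
        have hd1 : Cs / (Cs + 1) < 1 := (div_lt_one hCs1).2 (by linarith)
        have he : Cs * (φ s / (Cs + 1)) = Cs / (Cs + 1) * φ s := by ring
        rw [he]
        nlinarith [mul_pos (by linarith : (0:ℝ) < 1 - Cs / (Cs + 1)) hφs]
      linarith
    · obtain ⟨c, hc1, hc2, hce⟩ := mvtAux h0 hs hD1
      have hφs : 0 < φ s := hpos s hs
      have hz : φ θ₀ = 0 := hθ₀.1.2
      have h5 : 0 < (s - θ₀) * φ' c := by rw [hz] at hce; linarith
      have hc' : 0 < φ' c := by
        rcases mul_pos_iff.1 h5 with ⟨h6, h7⟩ | ⟨h6, h7⟩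
        · exact h7
        · linarith
      exact lt_of_lt_of_le hc' (hmono c s (h0.trans hc1) hc2.le)
  -- facts about θ₁
  have hSne : θ₀ + 1 ∈ {s : ℝ | 0 < s ∧ 0 < φ' s} :=
    ⟨by linarith, hder_pos _ (by linarith)⟩
  have hbdd : BddBelow {s : ℝ | 0 < s ∧ 0 < φ' s} := ⟨0, fun t ht => ht.1.le⟩
  have hθ₁0 : 0 ≤ θ₁ := by
    rw [hθ₁]; exact le_csInf ⟨_, hSne⟩ fun t ht => ht.1.le
  have hθ₁lt : ∀ z, θ₁ < z → 0 < φ' z := by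
    intro z hz
    have hz0 : 0 < z := lt_of_le_of_lt hθ₁0 hz
    rw [hθ₁] at hz
    obtain ⟨t, ht, htz⟩ := (csInf_lt_iff hbdd ⟨_, hSne⟩).1 hz
    exact lt_of_lt_of_le ht.2 (hmono t z ht.1 htz.le)
  refine ⟨⟨2, one_le_two, ?_⟩, ⟨25, by norm_num, ?_⟩, ?_⟩
  -- Part (a)
  · intro l hl x hx
    have hx0 : 0 < x := lt_of_le_of_lt (by linarith : (0:ℝ) ≤ 2 * θ₁) hx
    have hx2 : θ₁ < x / 2 := by linarith
    have hd2 : 0 < φ' (x / 2) := hθ₁lt _ hx2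
    have hdx : 0 < φ' x := hθ₁lt _ (by linarith)
    obtain ⟨c, hc1, hc2, hce⟩ := mvtAux (by linarith : (0:ℝ) < x / 2)
      (by linarith : x / 2 < x) hD2
    have hkey : x / 2 * φ'' x ≤ φ' x := by
      have h1 : φ'' x ≤ φ'' c := hφ''anti c x (by linarith) hc2.le
      linarith [hce, hd2, mul_le_mul_of_nonneg_left h1 (by linarith : (0:ℝ) ≤ x / 2)]
    rw [Real.rpow_one]
    rcases hl.lt_or_eq with h | h
    · have hxlx : x < l * x := by nlinarith
      obtain ⟨c', hc1', hc2', hce'⟩ := mvtAux hx0 hxlx hD2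
      have h1 : φ'' c' ≤ φ'' x := hφ''anti x c' hx0 hc1'.le
      have h4 : (l * x - x) * φ'' c' ≤ (l - 1) * x * φ'' x := by
        have hll : (0:ℝ) ≤ (l - 1) * x := by nlinarith
        have he : l * x - x = (l - 1) * x := by ring
        rw [he]
        exact mul_le_mul_of_nonneg_left h1 hll
      linarith [hce', h4, mul_le_mul_of_nonneg_left hkey
        (by linarith : (0:ℝ) ≤ l - 1), hdx]
    · rw [← h, one_mul]
      nlinarith [hdx]
  -- Part (b)
  · intro l hl x hx
    have hx0 : 0 < x := lt_of_le_of_lt (by linarith : (0:ℝ) ≤ 2 * θ₀) hx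
    have h2 : θ₀ < x / 2 := by linarith
    have h34 : θ₀ < 3 * x / 4 := by linarith
    have hxθ : θ₀ < x := by linarith
    have hφx : 0 < φ x := hpos x hxθ
    have hφ34 : 0 < φ (3 * x / 4) := hpos _ h34
    have hd2 : 0 < φ' (x / 2) := hder_pos _ h2
    have hd34 : 0 < φ' (3 * x / 4) := hder_pos _ h34
    obtain ⟨c₁, hc11, hc12, hce1⟩ := mvtAux (by linarith : (0:ℝ) < x / 2)
      (by linarith : x / 2 < 3 * x / 4) hD2
    have hi : x / 4 * φ'' x ≤ φ' (3 * x / 4) := by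
      have hh1 : φ'' x ≤ φ'' c₁ := hφ''anti c₁ x (by linarith) (by linarith)
      linarith [hce1, hd2, mul_le_mul_of_nonneg_left hh1 (by linarith : (0:ℝ) ≤ x / 4)]
    have hii : x / 4 * φ'' (3 * x / 4) ≤ φ' (3 * x / 4) := by
      have hh1 : φ'' (3 * x / 4) ≤ φ'' c₁ := hφ''anti c₁ _ (by linarith) (by linarith)
      linarith [hce1, hd2, mul_le_mul_of_nonneg_left hh1 (by linarith : (0:ℝ) ≤ x / 4)]
    obtain ⟨c₂, hc21, hc22, hce2⟩ := mvtAux (by linarith : (0:ℝ) < 3 * x / 4)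
      (by linarith : 3 * x / 4 < x) hD1
    have hF1 : x / 4 * φ' (3 * x / 4) ≤ φ x := by
      have hh1 : φ' (3 * x / 4) ≤ φ' c₂ := hmono _ _ (by linarith) (by linarith)
      linarith [hce2, hφ34, mul_le_mul_of_nonneg_left hh1 (by linarith : (0:ℝ) ≤ x / 4)]
    have hF1' : x ^ 2 * φ'' x ≤ 16 * φ x := by
      linarith [mul_le_mul_of_nonneg_left hi (by linarith : (0:ℝ) ≤ x / 4), hF1]
    obtain ⟨c₃, hc31, hc32, hce3⟩ := mvtAux (by linarith : (0:ℝ) < 3 * x / 4)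
      (by linarith : 3 * x / 4 < x) hD2
    have hF2 : x * φ' x ≤ 8 * φ x := by
      have h5 : φ'' c₃ ≤ φ'' (3 * x / 4) := hφ''anti _ _ (by linarith) (by linarith)
      have hF2a : φ' x ≤ 2 * φ' (3 * x / 4) := by
        linarith [hce3, hii, mul_le_mul_of_nonneg_left h5 (by linarith : (0:ℝ) ≤ x / 4)]
      have hF2b : x * φ' x ≤ x * (2 * φ' (3 * x / 4)) :=
        mul_le_mul_of_nonneg_left hF2a hx0.le
      linarith [hF2b, hF1]
    rw [Real.rpow_two]
    rcases hl.lt_or_eq with h | h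
    · have hxlx : x < l * x := by nlinarith
      obtain ⟨c₄, hc41, hc42, hce4⟩ := mvtAux hx0 hxlx hD1
      obtain ⟨c₅, hc51, hc52, hce5⟩ := mvtAux hx0 hc41 hD2
      have h6 : φ'' c₅ ≤ φ'' x := hφ''anti _ _ hx0 hc51.le
      have hlx0 : (0:ℝ) ≤ (l - 1) * x := by nlinarith
      have h7 : φ' c₄ ≤ φ' x + (l - 1) * x * φ'' x := by
        have hc4x : c₄ - x ≤ (l - 1) * x := by nlinarith
        have h0' : 0 ≤ φ'' x := hφ''nonneg x hx0
        have h7a : (c₄ - x) * φ'' c₅ ≤ (c₄ - x) * φ'' x :=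
          mul_le_mul_of_nonneg_left h6 (by linarith)
        have h7b : (c₄ - x) * φ'' x ≤ (l - 1) * x * φ'' x :=
          mul_le_mul_of_nonneg_right hc4x h0'
        linarith [hce5, h7a, h7b]
      have h8 : φ (l * x) ≤ φ x + (l - 1) * x * φ' x + ((l - 1) * x) * ((l - 1) * x * φ'' x) := by
        linarith [hce4, mul_le_mul_of_nonneg_left h7 hlx0]
      have h10 : (l - 1) * (x * φ' x) ≤ (l - 1) * (8 * φ x) :=
        mul_le_mul_of_nonneg_left hF2 (by linarith)
      have h11 : (l - 1) ^ 2 * (x ^ 2 * φ'' x) ≤ (l - 1) ^ 2 * (16 * φ x) :=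
        mul_le_mul_of_nonneg_left hF1' (sq_nonneg _)
      have hfin : 0 ≤ (9 * l ^ 2 + 24 * l - 9) * φ x :=
        mul_nonneg (by nlinarith) hφx.le
      linarith [h8, h10, h11, hfin]
    · rw [← h, one_mul]
      nlinarith [hφx]
  -- Part (c): the special case θ₀ = 0
  · rintro ⟨h0, -⟩ x hx l hl
    have hposx : ∀ t : ℝ, 0 < t → 0 < φ t := fun t ht => hpos t (h0 ▸ ht)
    have hdpos : ∀ t : ℝ, 0 < t → 0 < φ' t := fun t ht => hder_pos t (h0 ▸ ht)
    have key1 : ∀ t : ℝ, 0 < t → t * φ'' t ≤ φ' t := by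
      intro t ht
      by_contra hcon
      push_neg at hcon
      have hd := hdpos t ht
      have hppos : 0 < φ'' t := by nlinarith
      set u := min (t / 2) ((t * φ'' t - φ' t) / (2 * φ'' t)) with hu
      have hu0 : 0 < u := lt_min (by linarith) (div_pos (by linarith) (by linarith))
      have hut : u < t := lt_of_le_of_lt (min_le_left _ _) (by linarith)
      obtain ⟨c, hc1, hc2, hce⟩ := mvtAux hu0 hut hD2
      have h1 : φ'' t ≤ φ'' c := hφ''anti c t (hu0.trans hc1) hc2.le
      have h2 : 0 < φ' u := hdpos u hu0
      have h3 : u * φ'' t ≤ (t * φ'' t - φ' t) / 2 := by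
        have hle := min_le_right (t / 2) ((t * φ'' t - φ' t) / (2 * φ'' t))
        calc u * φ'' t ≤ (t * φ'' t - φ' t) / (2 * φ'' t) * φ'' t :=
              mul_le_mul_of_nonneg_right hle hppos.le
          _ = (t * φ'' t - φ' t) / 2 := by field_simp
      linarith [hce, h2, h3, mul_nonneg (by linarith : (0:ℝ) ≤ t - u)
        (by linarith : (0:ℝ) ≤ φ'' c - φ'' t)]
    have hg : ∀ t : ℝ, 0 < t → HasDerivAt (fun s => φ' s / s)
        ((φ'' t * t - φ' t) / t ^ 2) t := by
      intro t ht
      have h := (hD2 t ht).div (hasDerivAt_id t) (ne_of_gt ht)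
      refine h.congr_deriv ?_
      simp
    have key2 : ∀ y z : ℝ, 0 < y → y ≤ z → φ' z / z ≤ φ' y / y := by
      intro y z hy hyz
      rcases hyz.lt_or_eq with hlt | heq
      · obtain ⟨c, hc1, hc2, hce⟩ := mvtAux hy hlt hg
        have hc0 : 0 < c := hy.trans hc1
        have hnp : (φ'' c * c - φ' c) / c ^ 2 ≤ 0 := by
          apply div_nonpos_of_nonpos_of_nonneg ?_ (sq_nonneg c)
          nlinarith [key1 c hc0]
        linarith [hce, mul_nonneg (by linarith : (0:ℝ) ≤ z - y) (neg_nonneg.2 hnp)]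
      · rw [heq]
    have hlx : 0 < l * x := by nlinarith
    have hc1' : φ' (l * x) ≤ l * φ' x := by
      have hk := key2 x (l * x) hx (by nlinarith)
      rw [div_le_div_iff₀ hlx hx] at hk
      nlinarith
    have key3 : ∀ t : ℝ, 0 < t → t * φ' t ≤ 2 * φ t := by
      intro t ht
      by_contra hcon
      push_neg at hcon
      have hd := hdpos t ht
      set ε := t * φ' t - 2 * φ t with hε
      have hε0 : 0 < ε := by linarith
      set u := min (t / 2) (ε / (2 * φ' t)) with hu
      have hu0 : 0 < u := lt_min (by linarith) (by positivity)
      have hut : u < t := lt_of_le_of_lt (min_le_left _ _) (by linarith)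
      have hw : ∀ s : ℝ, 0 < s → HasDerivAt (fun r => φ r - r ^ 2 * (φ' t / (2 * t)))
          (φ' s - 2 * s * (φ' t / (2 * t))) s := by
        intro s hs
        have h := (hD1 s hs).sub ((hasDerivAt_pow 2 s).mul_const (φ' t / (2 * t)))
        refine h.congr_deriv ?_
        norm_num
      obtain ⟨c, hc1, hc2, hce⟩ := mvtAux hu0 hut hw
      have hc0 : 0 < c := hu0.trans hc1
      have hwd : 0 ≤ φ' c - 2 * c * (φ' t / (2 * t)) := by
        have hk := key2 c t hc0 hc2.le
        rw [div_le_div_iff₀ ht hc0] at hk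
        have hcalc : 2 * c * (φ' t / (2 * t)) = c * φ' t / t := by field_simp
        rw [sub_nonneg, hcalc, div_le_iff₀ ht]
        linarith
      have hφu : 0 < φ u := hposx u hu0
      have h3 : u * φ' t ≤ ε / 2 := by
        have hle := min_le_right (t / 2) (ε / (2 * φ' t))
        calc u * φ' t ≤ ε / (2 * φ' t) * φ' t := mul_le_mul_of_nonneg_right hle hd.le
          _ = ε / 2 := by field_simp
      have h4 : 0 ≤ (t - u) * (φ' c - 2 * c * (φ' t / (2 * t))) :=
        mul_nonneg (by linarith) hwd
      have hx2 : t ^ 2 * (φ' t / (2 * t)) = t * φ' t / 2 := by field_simp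
      have hu2 : u ^ 2 * (φ' t / (2 * t)) ≤ u * φ' t / 2 := by
        have hq : u ^ 2 ≤ u * t := by nlinarith
        calc u ^ 2 * (φ' t / (2 * t)) ≤ (u * t) * (φ' t / (2 * t)) :=
              mul_le_mul_of_nonneg_right hq (by positivity)
          _ = u * φ' t / 2 := by field_simp
      linarith [hce, h4, hφu, h3, hu2, hx2]
    have hh : ∀ t : ℝ, 0 < t → HasDerivAt (fun s => φ s / s ^ 2)
        ((φ' t * t ^ 2 - φ t * (2 * t)) / (t ^ 2) ^ 2) t := by
      intro t ht
      have h := (hD1 t ht).div (hasDerivAt_pow 2 t) (pow_ne_zero 2 (ne_of_gt ht))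
      refine h.congr_deriv ?_
      norm_num
    have hc2' : φ (l * x) ≤ l ^ 2 * φ x := by
      rcases hl.lt_or_eq with h | h
      · obtain ⟨c, hc1, hc2, hce⟩ := mvtAux hx (show x < l * x by nlinarith) hh
        have hc0 : 0 < c := hx.trans hc1
        have hd0 : (φ' c * c ^ 2 - φ c * (2 * c)) / (c ^ 2) ^ 2 ≤ 0 := by
          apply div_nonpos_of_nonpos_of_nonneg ?_ (by positivity)
          nlinarith [key3 c hc0]
        have hle : φ (l * x) / (l * x) ^ 2 ≤ φ x / x ^ 2 := by
          linarith [hce, mul_nonneg (by nlinarith : (0:ℝ) ≤ l * x - x) (neg_nonneg.2 hd0)]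
        rw [div_le_div_iff₀ (by positivity) (by positivity)] at hle
        nlinarith [hle, mul_pos hx hx]
      · rw [← h, one_mul, one_pow, one_mul]
    exact ⟨hc1', hc2'⟩

end
end

section
/- (Proposition 5) There is a constant C ≥ 1, depending only on φ, such that for all x > 2θ₀ one has φ(x) ≤ x φ'(x) ≤ C φ(x). Furthermore, for all x > 2θ₁ one has 2φ'(x) ≥ x φ''(x). -/
open MeasureTheory Real Set Filter

noncomputable section

lemma prop5_aux1 (u : ℝ) (_hu : 0 ≤ u) : 0 ≤ Real.exp (-u) - 1 + u := by
  nlinarith [Real.add_one_le_exp (-u)]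

lemma prop5_aux2 (u : ℝ) (hu : 0 ≤ u) : Real.exp (-u) - 1 + u ≤ u ^ 2 := by
  have h1 : (0:ℝ) < 1 + u := by linarith
  have h2 : Real.exp (-u) ≤ (1 + u)⁻¹ := by
    rw [Real.exp_neg]
    exact inv_anti₀ h1 (by nlinarith [Real.add_one_le_exp u])
  have h3 : (1 + u)⁻¹ ≤ 1 - u + u ^ 2 := by
    rw [inv_eq_one_div, div_le_iff₀ h1]; nlinarith
  linarith

lemma prop5_aux3 (u : ℝ) (hu : 0 ≤ u) : u ^ 2 * Real.exp (-u) ≤ 4 := by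
  have h2 : u ^ 2 / 4 ≤ Real.exp u := by
    have h0 := Real.exp_pos (u/2)
    calc u ^ 2 / 4 ≤ (1 + u/2) ^ 2 := by nlinarith
    _ ≤ Real.exp (u/2) ^ 2 := by nlinarith [Real.add_one_le_exp (u/2)]
    _ = Real.exp u := by rw [sq, ← Real.exp_add]; norm_num
  have h3 := Real.exp_pos u
  rw [Real.exp_neg, mul_inv_le_iff₀ h3]
  linarith

lemma prop5_aux4 (u : ℝ) (hu : 2 ≤ u) : u / 2 ≤ Real.exp (-u) - 1 + u := by
  nlinarith [Real.exp_pos (-u)]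



set_option maxHeartbeats 1000000 in
/-- Proposition 5. -/
theorem statement1
    (ν : Measure ℝ) [SigmaFinite ν]
    (hint : ∫⁻ x in Ioi (0:ℝ), ENNReal.ofReal (min 1 (x ^ 2)) ∂ν ≠ ⊤)
    (σ b : ℝ) (hσ : 0 ≤ σ)
    (φ φ' φ'' : ℝ → ℝ)
    (hφ : ∀ l : ℝ, 0 ≤ l → φ l = σ ^ 2 * l ^ 2 - b * l +
      ∫ x in Ioi (0:ℝ), (Real.exp (-(l * x)) - 1 + l * x * (if x < 1 then 1 else 0)) ∂ν)
    (hD1 : ∀ x : ℝ, 0 < x → HasDerivAt φ (φ' x) x)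
    (hD2 : ∀ x : ℝ, 0 < x → HasDerivAt φ' (φ'' x) x)
    (hφ'' : ∀ l : ℝ, 0 < l → φ'' l = 2 * σ ^ 2 + ∫ x in Ioi (0:ℝ), x ^ 2 * Real.exp (-(l * x)) ∂ν)
    (hUV : 0 < σ ∨ ∫⁻ x in Ioo (0:ℝ) 1, ENNReal.ofReal x ∂ν = ⊤)
    (θ₀ θ₁ : ℝ)
    (hθ₀ : IsGreatest {s : ℝ | 0 ≤ s ∧ φ s = 0} θ₀)
    (hθ₁ : θ₁ = sInf {s : ℝ | 0 < s ∧ 0 < φ' s})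
    :
    ∃ C : ℝ, 1 ≤ C ∧
      (∀ x : ℝ, 2 * θ₀ < x → φ x ≤ x * φ' x ∧ x * φ' x ≤ C * φ x) ∧
      (∀ x : ℝ, 2 * θ₁ < x → x * φ'' x ≤ 2 * φ' x) := by
  obtain ⟨⟨hθ₀0, hφθ₀⟩, hθ₀ub⟩ := hθ₀
  -- integrability of the dominating function
  have hmin : IntegrableOn (fun x => min 1 (x ^ 2)) (Ioi (0:ℝ)) ν := by
    constructor
    · exact (measurable_const.min (measurable_id.pow_const 2)).aestronglyMeasurable
    · rw [hasFiniteIntegral_iff_ofReal]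
      · exact lt_top_iff_ne_top.2 hint
      · exact ae_of_all _ (fun x => le_min zero_le_one (sq_nonneg x))
  -- general domination principle
  have hdom : ∀ (g : ℝ → ℝ), Measurable g → ∀ K : ℝ,
      (∀ x ∈ Ioi (0:ℝ), |g x| ≤ K * min 1 (x ^ 2)) → IntegrableOn g (Ioi (0:ℝ)) ν := by
    intro g hg K hK
    apply Integrable.mono' (hmin.const_mul K) hg.aestronglyMeasurable
    rw [ae_restrict_iff' measurableSet_Ioi]
    exact ae_of_all _ (fun x hx => by rw [Real.norm_eq_abs]; exact hK x hx)
  -- integrability of second-derivative integrand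
  have hint2 : ∀ l : ℝ, 0 < l →
      IntegrableOn (fun x => x ^ 2 * Real.exp (-(l * x))) (Ioi (0:ℝ)) ν := by
    intro l hl
    apply hdom _ (by fun_prop) (max (4 / l ^ 2) 1)
    intro x hx
    have hx0 : 0 < x := hx
    have he : 0 < Real.exp (-(l * x)) := Real.exp_pos _
    rw [abs_of_nonneg (by positivity)]
    rcases le_total x 1 with h1 | h1
    · have hmin1 : min 1 (x ^ 2) = x ^ 2 := min_eq_right (by nlinarith)
      rw [hmin1]
      have : Real.exp (-(l * x)) ≤ 1 := Real.exp_le_one_iff.2 (by nlinarith)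
      nlinarith [le_max_right (4 / l ^ 2) (1:ℝ)]
    · have hmin1 : min 1 (x ^ 2) = 1 := min_eq_left (by nlinarith)
      rw [hmin1, mul_one]
      have h3 := prop5_aux3 (l * x) (by positivity)
      have : x ^ 2 * Real.exp (-(l * x)) ≤ 4 / l ^ 2 := by
        rw [le_div_iff₀ (by positivity)]
        calc x ^ 2 * Real.exp (-(l * x)) * l ^ 2 = (l * x) ^ 2 * Real.exp (-(l * x)) := by ring
        _ ≤ 4 := h3
      exact this.trans (le_max_left _ _)
  -- integrability of the Laplace exponent integrand
  have hintφ : ∀ l : ℝ, 0 ≤ l →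
      IntegrableOn (fun x => Real.exp (-(l * x)) - 1 + l * x * (if x < 1 then 1 else 0))
        (Ioi (0:ℝ)) ν := by
    intro l hl
    have hg : Measurable fun x : ℝ =>
        Real.exp (-(l * x)) - 1 + l * x * (if x < 1 then 1 else 0) := by
      apply Measurable.add (by fun_prop)
      exact (measurable_const.mul measurable_id).mul
        (measurable_const.ite measurableSet_Iio measurable_const)
    apply hdom _ hg (max (l ^ 2) 1)
    intro x hx
    have hx0 : 0 < x := hx
    have hlx : 0 ≤ l * x := by positivity
    rcases lt_or_ge x 1 with h1 | h1
    · rw [if_pos h1, mul_one]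
      have hmin1 : min 1 (x ^ 2) = x ^ 2 := min_eq_right (by nlinarith)
      rw [hmin1, abs_of_nonneg (prop5_aux1 _ hlx)]
      have h2 := prop5_aux2 (l * x) hlx
      nlinarith [le_max_left (l ^ 2) (1:ℝ)]
    · rw [if_neg (not_lt.2 h1), mul_zero, add_zero]
      have hmin1 : min 1 (x ^ 2) = 1 := min_eq_left (by nlinarith)
      have he : 0 < Real.exp (-(l * x)) := Real.exp_pos _
      have he1 : Real.exp (-(l * x)) ≤ 1 := Real.exp_le_one_iff.2 (by nlinarith)
      rw [hmin1, mul_one, abs_of_nonpos (by linarith)]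
      nlinarith [le_max_right (l ^ 2) (1:ℝ)]
  have hsub1 : Ioo (0:ℝ) 1 ⊆ Ioi 0 := Ioo_subset_Ioi_self
  have hsub2 : Ici (1:ℝ) ⊆ Ioi 0 := fun x hx => mem_Ioi.2 (lt_of_lt_of_le zero_lt_one (mem_Ici.1 hx))
  have hdisj : Disjoint (Ioo (0:ℝ) 1) (Ici 1) := by
    rw [Set.disjoint_left]; rintro x ⟨_, h2⟩ h3; exact absurd h3 (not_le.2 h2)
  -- splitting of the Laplace exponent
  have hA_int : ∀ l : ℝ, 0 ≤ l →
      IntegrableOn (fun x => Real.exp (-(l * x)) - 1 + l * x) (Ioo (0:ℝ) 1) ν := by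
    intro l hl
    refine ((hintφ l hl).mono_set hsub1).congr_fun ?_ measurableSet_Ioo
    intro x hx
    simp only [if_pos hx.2, mul_one]
  have hB_int : ∀ l : ℝ, 0 ≤ l →
      IntegrableOn (fun x => Real.exp (-(l * x)) - 1) (Ici (1:ℝ)) ν := by
    intro l hl
    refine ((hintφ l hl).mono_set hsub2).congr_fun ?_ measurableSet_Ici
    intro x hx
    simp only [if_neg (not_lt.2 (mem_Ici.1 hx)), mul_zero, add_zero]
  have hsplit : ∀ l : ℝ, 0 ≤ l → φ l = σ ^ 2 * l ^ 2 - b * l +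
      (∫ x in Ioo (0:ℝ) 1, (Real.exp (-(l * x)) - 1 + l * x) ∂ν) +
      (∫ x in Ici (1:ℝ), (Real.exp (-(l * x)) - 1) ∂ν) := by
    intro l hl
    rw [hφ l hl, ← Ioo_union_Ici_eq_Ioi (zero_lt_one (α := ℝ)),
      setIntegral_union hdisj measurableSet_Ici ((hintφ l hl).mono_set hsub1)
        ((hintφ l hl).mono_set hsub2)]
    have e1 : (∫ x in Ioo (0:ℝ) 1, (Real.exp (-(l * x)) - 1 + l * x * (if x < 1 then 1 else 0)) ∂ν)
        = ∫ x in Ioo (0:ℝ) 1, (Real.exp (-(l * x)) - 1 + l * x) ∂ν :=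
      setIntegral_congr_fun measurableSet_Ioo
        (fun x (hx : x ∈ Ioo (0:ℝ) 1) => by simp only [if_pos hx.2, mul_one])
    have e2 : (∫ x in Ici (1:ℝ), (Real.exp (-(l * x)) - 1 + l * x * (if x < 1 then 1 else 0)) ∂ν)
        = ∫ x in Ici (1:ℝ), (Real.exp (-(l * x)) - 1) ∂ν :=
      setIntegral_congr_fun measurableSet_Ici
        (fun x (hx : x ∈ Ici (1:ℝ)) => by simp only [if_neg (not_lt.2 (mem_Ici.1 hx)), mul_zero, add_zero])
    rw [e1, e2]
    ring
  have hφ''nonneg : ∀ l : ℝ, 0 < l → 0 ≤ φ'' l := by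
    intro l hl
    rw [hφ'' l hl]
    have h1 : 0 ≤ ∫ x in Ioi (0:ℝ), x ^ 2 * Real.exp (-(l * x)) ∂ν :=
      setIntegral_nonneg measurableSet_Ioi (fun x _ => by positivity)
    positivity
  have hanti : ∀ a c : ℝ, 0 < a → a ≤ c → φ'' c ≤ φ'' a := by
    intro a c ha hac
    rw [hφ'' a ha, hφ'' c (lt_of_lt_of_le ha hac)]
    have h1 : (∫ x in Ioi (0:ℝ), x ^ 2 * Real.exp (-(c * x)) ∂ν)
        ≤ ∫ x in Ioi (0:ℝ), x ^ 2 * Real.exp (-(a * x)) ∂ν := by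
      apply setIntegral_mono_on (hint2 c (lt_of_lt_of_le ha hac)) (hint2 a ha) measurableSet_Ioi
      intro x hx
      have hx0 : (0:ℝ) < x := hx
      have : Real.exp (-(c * x)) ≤ Real.exp (-(a * x)) := by
        apply Real.exp_le_exp.2; nlinarith
      nlinarith
    linarith
  have slope : ∀ (f g : ℝ → ℝ), (∀ x : ℝ, 0 < x → HasDerivAt f (g x) x) →
      ∀ a c : ℝ, 0 < a → a < c → ∃ ξ, a < ξ ∧ ξ < c ∧ f c - f a = g ξ * (c - a) := by
    intro f g hd a c ha hac
    obtain ⟨ξ, hξ, heq⟩ := exists_hasDerivAt_eq_slope f g hac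
      (fun x hx => (hd x (lt_of_lt_of_le ha hx.1)).continuousAt.continuousWithinAt)
      (fun x hx => hd x (ha.trans hx.1))
    refine ⟨ξ, hξ.1, hξ.2, ?_⟩
    have hne : c - a ≠ 0 := sub_ne_zero.2 (ne_of_gt hac)
    rw [heq]
    field_simp
  have hmono' : ∀ a c : ℝ, 0 < a → a ≤ c → φ' a ≤ φ' c := by
    intro a c ha hac
    rcases eq_or_lt_of_le hac with rfl | hlt
    · exact le_refl _
    · obtain ⟨ξ, hξ1, hξ2, heq⟩ := slope φ' φ'' hD2 a c ha hlt
      nlinarith [hφ''nonneg ξ (ha.trans hξ1)]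
  have mvt1 : ∀ a c : ℝ, 0 < a → a < c → φ c - φ a ≤ φ' c * (c - a) := by
    intro a c ha hac
    obtain ⟨ξ, hξ1, hξ2, heq⟩ := slope φ φ' hD1 a c ha hac
    nlinarith [hmono' ξ c (ha.trans hξ1) (le_of_lt hξ2)]
  have mvt2 : ∀ a c : ℝ, 0 < a → a < c → φ' a * (c - a) ≤ φ c - φ a := by
    intro a c ha hac
    obtain ⟨ξ, hξ1, hξ2, heq⟩ := slope φ φ' hD1 a c ha hac
    nlinarith [hmono' a ξ ha (le_of_lt hξ1)]
  have mvt3 : ∀ a c : ℝ, 0 < a → a < c → φ' c - φ' a ≤ φ'' a * (c - a) := by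
    intro a c ha hac
    obtain ⟨ξ, hξ1, hξ2, heq⟩ := slope φ' φ'' hD2 a c ha hac
    nlinarith [hanti a ξ ha (le_of_lt hξ1)]
  have mvt4 : ∀ a c : ℝ, 0 < a → a < c → φ'' c * (c - a) ≤ φ' c - φ' a := by
    intro a c ha hac
    obtain ⟨ξ, hξ1, hξ2, heq⟩ := slope φ' φ'' hD2 a c ha hac
    nlinarith [hanti ξ c (ha.trans hξ1) (le_of_lt hξ2)]
  -- φ takes small values near 0
  have hx2_int : IntegrableOn (fun x : ℝ => x ^ 2) (Ioo (0:ℝ) 1) ν := by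
    refine (hmin.mono_set Ioo_subset_Ioi_self).congr_fun ?_ measurableSet_Ioo
    intro x hx
    exact min_eq_right (by nlinarith [hx.1, hx.2])
  have hC₁ : 0 ≤ ∫ x in Ioo (0:ℝ) 1, x ^ 2 ∂ν :=
    setIntegral_nonneg measurableSet_Ioo (fun x _ => sq_nonneg x)
  set C₁ : ℝ := ∫ x in Ioo (0:ℝ) 1, x ^ 2 ∂ν with hC₁def
  have hA_le : ∀ l : ℝ, 0 ≤ l →
      (∫ x in Ioo (0:ℝ) 1, (Real.exp (-(l * x)) - 1 + l * x) ∂ν) ≤ l ^ 2 * C₁ := by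
    intro l hl
    have h1 : (∫ x in Ioo (0:ℝ) 1, (Real.exp (-(l * x)) - 1 + l * x) ∂ν)
        ≤ ∫ x in Ioo (0:ℝ) 1, l ^ 2 * x ^ 2 ∂ν := by
      apply setIntegral_mono_on (hA_int l hl) (hx2_int.const_mul (l ^ 2)) measurableSet_Ioo
      intro x hx
      have := prop5_aux2 (l * x) (by nlinarith [hx.1])
      nlinarith
    rwa [integral_const_mul] at h1
  have hB_nonpos : ∀ l : ℝ, 0 ≤ l →
      (∫ x in Ici (1:ℝ), (Real.exp (-(l * x)) - 1) ∂ν) ≤ 0 := by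
    intro l hl
    apply setIntegral_nonpos measurableSet_Ici
    intro x hx
    have : Real.exp (-(l * x)) ≤ 1 := Real.exp_le_one_iff.2 (by nlinarith [le_trans zero_le_one (mem_Ici.1 hx)])
    linarith
  have hsmall : ∀ δ : ℝ, 0 < δ → ∀ X : ℝ, 0 < X → ∃ ε, 0 < ε ∧ ε < X ∧ φ ε ≤ δ := by
    intro δ hδ X hX
    set K : ℝ := σ ^ 2 + |b| + C₁ + 1 with hKdef
    have hK : 0 < K := by positivity
    refine ⟨min (X / 2) (min 1 (δ / K)), ?_, ?_, ?_⟩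
    · have := div_pos hδ hK
      positivity
    · calc min (X / 2) (min 1 (δ / K)) ≤ X / 2 := min_le_left _ _
      _ < X := by linarith
    · set ε : ℝ := min (X / 2) (min 1 (δ / K)) with hεdef
      have hε0 : 0 < ε := by
        have := div_pos hδ hK
        positivity
      have hε1 : ε ≤ 1 := le_trans (min_le_right _ _) (min_le_left _ _)
      have hεδ : ε ≤ δ / K := le_trans (min_le_right _ _) (min_le_right _ _)
      have h1 := hA_le ε (le_of_lt hε0)
      have h2 := hB_nonpos ε (le_of_lt hε0)
      rw [hsplit ε (le_of_lt hε0)]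
      have hbb : -b * ε ≤ |b| * ε := by
        have : -b ≤ |b| := neg_le_abs b
        nlinarith
      have hKε : K * ε ≤ δ := by
        have := (le_div_iff₀ hK).1 hεδ
        linarith [this, mul_comm ε K]
      have e1 : σ ^ 2 * ε ^ 2 ≤ σ ^ 2 * ε := by
        nlinarith [mul_nonneg (sq_nonneg σ) (mul_nonneg hε0.le (sub_nonneg.2 hε1))]
      have e2 : ε ^ 2 * C₁ ≤ C₁ * ε := by
        nlinarith [mul_nonneg hC₁ (mul_nonneg hε0.le (sub_nonneg.2 hε1))]
      have expand : K * ε = σ ^ 2 * ε + |b| * ε + C₁ * ε + ε := by rw [hKdef]; ring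
      linarith
  -- φ is eventually positive
  -- the mass of [1, ∞) is finite
  have mfin : ν (Ici (1:ℝ)) ≠ ⊤ := by
    have h1 : ν (Ici (1:ℝ)) = ∫⁻ x in Ici (1:ℝ), ENNReal.ofReal (min 1 (x ^ 2)) ∂ν := by
      rw [← setLIntegral_one]
      apply setLIntegral_congr_fun measurableSet_Ici
      intro x hx
      have hx1 : (1:ℝ) ≤ x := hx
      have : min 1 (x ^ 2) = 1 := min_eq_left (by nlinarith)
      simp only [this, ENNReal.ofReal_one]
    rw [h1]
    exact ne_top_of_le_ne_top hint (lintegral_mono_set hsub2)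
  set m : ℝ := (ν (Ici (1:ℝ))).toReal with hmdef
  have hm0 : 0 ≤ m := ENNReal.toReal_nonneg
  have hB_ge : ∀ l : ℝ, 0 ≤ l → -m ≤ ∫ x in Ici (1:ℝ), (Real.exp (-(l * x)) - 1) ∂ν := by
    intro l hl
    have hconst : IntegrableOn (fun _ : ℝ => (-1 : ℝ)) (Ici (1:ℝ)) ν :=
      integrableOn_const mfin
    have h1 : (∫ _x in Ici (1:ℝ), (-1 : ℝ) ∂ν) ≤ ∫ x in Ici (1:ℝ), (Real.exp (-(l * x)) - 1) ∂ν := by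
      apply setIntegral_mono_on hconst (hB_int l hl) measurableSet_Ici
      intro x hx
      have := Real.exp_pos (-(l * x))
      linarith
    rw [setIntegral_const] at h1
    rw [smul_eq_mul] at h1
    change (ν (Ici (1:ℝ))).toReal * -1 ≤ _ at h1
    linarith
  -- nonnegativity of the A part
  have hA_nonneg : ∀ l : ℝ, 0 ≤ l →
      0 ≤ ∫ x in Ioo (0:ℝ) 1, (Real.exp (-(l * x)) - 1 + l * x) ∂ν := by
    intro l hl
    apply setIntegral_nonneg measurableSet_Ioo
    intro x hx
    exact prop5_aux1 _ (by nlinarith [hx.1])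
  have hbig : ∀ s : ℝ, ∃ l, s < l ∧ 0 < φ l := by
    intro s
    rcases hUV with hσpos | hinf
    · refine ⟨max (s + 1) (max 1 ((|b| + m + 1) / σ ^ 2)), lt_of_lt_of_le (by linarith) (le_max_left _ _), ?_⟩
      set l : ℝ := max (s + 1) (max 1 ((|b| + m + 1) / σ ^ 2)) with hldef
      have hl1 : 1 ≤ l := le_trans (le_max_left _ _) (le_max_right _ _)
      have hl0 : 0 ≤ l := by linarith
      have hlσ : (|b| + m + 1) / σ ^ 2 ≤ l := le_trans (le_max_right _ _) (le_max_right _ _)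
      have hσ2 : 0 < σ ^ 2 := by positivity
      have h2 : |b| + m + 1 ≤ σ ^ 2 * l := by
        rw [div_le_iff₀ hσ2] at hlσ
        linarith [mul_comm l (σ ^ 2)]
      rw [hsplit l hl0]
      have h3 := hA_nonneg l hl0
      have h4 := hB_ge l hl0
      have h5 : -b ≤ |b| := neg_le_abs b
      have h6 : (|b| + m + 1) * l ≤ σ ^ 2 * l ^ 2 := by nlinarith
      have h7 : b * l ≤ |b| * l := mul_le_mul_of_nonneg_right (le_abs_self b) hl0
      have h8 : m + 1 ≤ (m + 1) * l := by nlinarith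
      linarith
    · -- MCT: find r with large truncated first moment
      set T : ℝ := 2 * (|b| + m + 1) with hTdef
      have hT0 : 0 ≤ T := by positivity
      obtain ⟨r, hr0, hr1, hνr, hrT⟩ : ∃ r : ℝ, 0 < r ∧ r < 1 ∧ ν (Ioo r 1) < ⊤ ∧
          T ≤ ∫ x in Ioo r 1, x ∂ν := by
        set F : ℕ → ℝ → ENNReal :=
          fun n => (Ioo (1 / ((n:ℝ) + 2)) 1).indicator (fun x => ENNReal.ofReal x) with hF
        have hFmeas : ∀ n, Measurable (F n) := fun n =>
          (measurable_id.ennreal_ofReal).indicator measurableSet_Ioo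
        have hsets : ∀ n k : ℕ, n ≤ k → Ioo (1 / ((n:ℝ) + 2)) 1 ⊆ Ioo (1 / ((k:ℝ) + 2)) 1 := by
          intro n k hnk x hx
          refine ⟨lt_of_le_of_lt ?_ hx.1, hx.2⟩
          apply one_div_le_one_div_of_le (by positivity)
          have : (n:ℝ) ≤ (k:ℝ) := Nat.cast_le.2 hnk
          linarith
        have hFmono : Monotone F := by
          intro n k hnk x
          exact Set.indicator_le_indicator_of_subset (hsets n k hnk) (fun _ => zero_le) x
        have hFsup : (fun x => ⨆ n, F n x)
            = (Ioo (0:ℝ) 1).indicator (fun x => ENNReal.ofReal x) := by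
          funext x
          by_cases hx : x ∈ Ioo (0:ℝ) 1
          · rw [Set.indicator_of_mem hx]
            apply le_antisymm
            · apply iSup_le
              intro n
              by_cases hxn : x ∈ Ioo (1 / ((n:ℝ) + 2)) 1
              · rw [hF]; simp only [Set.indicator_of_mem hxn]; exact le_refl _
              · rw [hF]; simp only [Set.indicator_of_notMem hxn]; exact zero_le
            · obtain ⟨n, hn⟩ := exists_nat_gt (1 / x)
              have hx0 : 0 < x := hx.1
              have hxn : x ∈ Ioo (1 / ((n:ℝ) + 2)) 1 := by
                constructor
                · rw [div_lt_iff₀ (by positivity)]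
                  rw [div_lt_iff₀ hx0] at hn
                  nlinarith
                · exact hx.2
              have : ENNReal.ofReal x = F n x := by rw [hF]; simp only [Set.indicator_of_mem hxn]
              rw [this]
              exact le_iSup (fun n => F n x) n
          · rw [Set.indicator_of_notMem hx]
            apply le_antisymm _ (zero_le)
            apply iSup_le
            intro n
            have hxn : x ∉ Ioo (1 / ((n:ℝ) + 2)) 1 := by
              intro hc
              exact hx ⟨lt_trans (by positivity) hc.1, hc.2⟩
            rw [hF]; simp only [Set.indicator_of_notMem hxn]; exact le_refl _
        have hlim : (⨆ n, ∫⁻ x, F n x ∂ν) = ∫⁻ x in Ioo (0:ℝ) 1, ENNReal.ofReal x ∂ν :=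
          calc (⨆ n, ∫⁻ x, F n x ∂ν) = ∫⁻ x, ⨆ n, F n x ∂ν := (lintegral_iSup hFmeas hFmono).symm
          _ = ∫⁻ x, (Ioo (0:ℝ) 1).indicator (fun x => ENNReal.ofReal x) x ∂ν := by rw [hFsup]
          _ = ∫⁻ x in Ioo (0:ℝ) 1, ENNReal.ofReal x ∂ν :=
              lintegral_indicator measurableSet_Ioo _
        have htop : (ENNReal.ofReal T) < ⨆ n, ∫⁻ x, F n x ∂ν := by
          rw [hlim, hinf]
          exact ENNReal.ofReal_lt_top
        obtain ⟨n, hn⟩ := lt_iSup_iff.1 htop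
        rw [hF] at hn
        simp only [lintegral_indicator measurableSet_Ioo] at hn
        set r : ℝ := 1 / ((n:ℝ) + 2) with hrdef
        have hr0 : 0 < r := by positivity
        have hr1 : r < 1 := by
          rw [hrdef, div_lt_one (by positivity)]
          have : (0:ℝ) ≤ (n:ℝ) := Nat.cast_nonneg n
          linarith
        -- finiteness of ν (Ioo r 1)
        have hcmp : ENNReal.ofReal (r ^ 2) * ν (Ioo r 1)
            ≤ ∫⁻ x in Ioi (0:ℝ), ENNReal.ofReal (min 1 (x ^ 2)) ∂ν := by
          calc ENNReal.ofReal (r ^ 2) * ν (Ioo r 1)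
              = ∫⁻ _x in Ioo r 1, ENNReal.ofReal (r ^ 2) ∂ν := (setLIntegral_const _ _).symm
          _ ≤ ∫⁻ x in Ioo r 1, ENNReal.ofReal (min 1 (x ^ 2)) ∂ν := by
              apply setLIntegral_mono (by fun_prop : Measurable fun x : ℝ => ENNReal.ofReal (min 1 (x ^ 2)))
              intro x hx
              apply ENNReal.ofReal_le_ofReal
              have h1 : r ≤ x := le_of_lt hx.1
              have h2 : x ≤ 1 := le_of_lt hx.2
              apply le_min (by nlinarith) (by nlinarith)
          _ ≤ ∫⁻ x in Ioi (0:ℝ), ENNReal.ofReal (min 1 (x ^ 2)) ∂ν :=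
              lintegral_mono_set (fun x hx => lt_trans hr0 hx.1)
        have hνr : ν (Ioo r 1) < ⊤ :=
          ENNReal.lt_top_of_mul_ne_top_right (ne_top_of_le_ne_top hint hcmp)
            (by simp only [ne_eq, ENNReal.ofReal_eq_zero, not_le]; positivity)
        have hLne : ∫⁻ x in Ioo r 1, ENNReal.ofReal x ∂ν ≠ ⊤ := by
          have h1 : ∫⁻ x in Ioo r 1, ENNReal.ofReal x ∂ν ≤ ∫⁻ _x in Ioo r 1, 1 ∂ν := by
            apply setLIntegral_mono measurable_const
            intro x hx
            calc ENNReal.ofReal x ≤ ENNReal.ofReal 1 := ENNReal.ofReal_le_ofReal (le_of_lt hx.2)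
            _ = 1 := ENNReal.ofReal_one
          rw [setLIntegral_one] at h1
          exact ne_top_of_le_ne_top (lt_top_iff_ne_top.1 hνr) h1
        refine ⟨r, hr0, hr1, hνr, ?_⟩
        have hnn : 0 ≤ᵐ[ν.restrict (Ioo r 1)] fun x : ℝ => x := by
          filter_upwards [ae_restrict_mem measurableSet_Ioo] with x hx
          exact le_of_lt (lt_trans hr0 hx.1)
        rw [integral_eq_lintegral_of_nonneg_ae hnn measurable_id.aestronglyMeasurable.restrict]
        have := ENNReal.toReal_mono hLne (le_of_lt hn)
        rwa [ENNReal.toReal_ofReal hT0] at this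
      -- now choose l large
      have hsubr : Ioo r 1 ⊆ Ioo (0:ℝ) 1 := fun x hx => ⟨lt_trans hr0 hx.1, hx.2⟩
      refine ⟨max (s + 1) (max 1 (2 / r)), lt_of_lt_of_le (by linarith) (le_max_left _ _), ?_⟩
      set l : ℝ := max (s + 1) (max 1 (2 / r)) with hldef
      have hl1 : 1 ≤ l := le_trans (le_max_left _ _) (le_max_right _ _)
      have hl0 : 0 ≤ l := by linarith
      have hl2r : 2 / r ≤ l := le_trans (le_max_right _ _) (le_max_right _ _)
      have hir : IntegrableOn (fun x : ℝ => x) (Ioo r 1) ν := by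
        constructor
        · exact measurable_id.aestronglyMeasurable
        · apply HasFiniteIntegral.mono' (integrableOn_const hνr.ne).2 (g := fun _ => (1:ℝ))
          rw [ae_restrict_iff' measurableSet_Ioo]
          apply ae_of_all
          intro x hx
          rw [Real.norm_eq_abs, abs_of_nonneg (le_of_lt (lt_trans hr0 hx.1))]
          exact le_of_lt hx.2
      have hstep1 : l / 2 * (∫ x in Ioo r 1, x ∂ν) ≤ ∫ x in Ioo r 1, (Real.exp (-(l * x)) - 1 + l * x) ∂ν := by
        rw [← integral_const_mul]
        apply setIntegral_mono_on (hir.const_mul (l / 2)) ((hA_int l hl0).mono_set hsubr)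
          measurableSet_Ioo
        intro x hx
        have hlx : 2 ≤ l * x := by
          have h1 : 2 / r ≤ l := hl2r
          have h2 : r < x := hx.1
          rw [div_le_iff₀ hr0] at h1
          nlinarith
        have := prop5_aux4 (l * x) hlx
        linarith
      have hstep2 : (∫ x in Ioo r 1, (Real.exp (-(l * x)) - 1 + l * x) ∂ν)
          ≤ ∫ x in Ioo (0:ℝ) 1, (Real.exp (-(l * x)) - 1 + l * x) ∂ν := by
        apply setIntegral_mono_set (hA_int l hl0)
        · filter_upwards [ae_restrict_mem measurableSet_Ioo] with x hx
          exact prop5_aux1 _ (by nlinarith [hx.1, hl0])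
        · exact HasSubset.Subset.eventuallyLE hsubr
      have hTl : T * (l / 2) ≤ ∫ x in Ioo (0:ℝ) 1, (Real.exp (-(l * x)) - 1 + l * x) ∂ν := by
        have := mul_le_mul_of_nonneg_left hrT (by linarith : (0:ℝ) ≤ l / 2)
        calc T * (l / 2) = l / 2 * T := by ring
        _ ≤ l / 2 * ∫ x in Ioo r 1, x ∂ν := this
        _ ≤ _ := le_trans hstep1 hstep2
      rw [hsplit l hl0]
      have h4 := hB_ge l hl0
      have h7 : b * l ≤ |b| * l := mul_le_mul_of_nonneg_right (le_abs_self b) hl0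
      have h8 : m + 1 ≤ (m + 1) * l := by nlinarith
      have hσl : 0 ≤ σ ^ 2 * l ^ 2 := by positivity
      have hexp : T * (l / 2) = |b| * l + m * l + l := by rw [hTdef]; ring
      linarith
  have hpos : ∀ s : ℝ, θ₀ < s → 0 < φ s := by
    intro s hs
    have hs0 : 0 < s := lt_of_le_of_lt hθ₀0 hs
    have hne : φ s ≠ 0 := by
      intro h0
      exact absurd (hθ₀ub ⟨le_of_lt hs0, h0⟩) (not_le.2 hs)
    rcases lt_or_gt_of_ne hne with hlt | hgt
    · exfalso
      obtain ⟨l, hsl, hl⟩ := hbig s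
      have hcont : ContinuousOn φ (Icc s l) := fun x hx =>
        (hD1 x (lt_of_lt_of_le hs0 hx.1)).continuousAt.continuousWithinAt
      have h0mem : (0:ℝ) ∈ Ioo (φ s) (φ l) := ⟨hlt, hl⟩
      obtain ⟨c, hc, hc0⟩ := intermediate_value_Ioo (le_of_lt hsl) hcont h0mem
      have : c ≤ θ₀ := hθ₀ub ⟨by linarith [hc.1], hc0⟩
      linarith [hc.1]
    · exact hgt
  have hder_pos : ∀ s : ℝ, θ₀ < s → 0 < φ' s := by
    intro s hs
    have hs0 : 0 < s := lt_of_le_of_lt hθ₀0 hs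
    have hφs := hpos s hs
    obtain ⟨ε, hε0, hεs, hεφ⟩ := hsmall (φ s / 2) (by linarith) s hs0
    have h1 := mvt1 ε s hε0 hεs
    by_contra hc
    push_neg at hc
    have h2 : φ' s * (s - ε) ≤ 0 := mul_nonpos_of_nonpos_of_nonneg hc (by linarith)
    linarith
  refine ⟨8, by norm_num, ?_, ?_⟩
  · intro x hx
    have hx0 : 0 < x := lt_of_le_of_lt (by linarith) hx
    have hxθ : θ₀ < x := by linarith
    constructor
    · -- φ x ≤ x * φ' x
      have hd := hder_pos x hxθ
      refine le_of_forall_pos_le_add ?_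
      intro δ hδ
      obtain ⟨ε, hε0, hεx, hεδ⟩ := hsmall δ hδ x hx0
      have h1 := mvt1 ε x hε0 hεx
      nlinarith
    · -- x * φ' x ≤ 8 * φ x
      have h2θ : θ₀ < x / 2 := by linarith
      have htθ : θ₀ < 3 * x / 4 := by linarith
      have h1 := mvt3 (3 * x / 4) x (by linarith) (by linarith)
      have h2 := mvt4 (x / 2) (3 * x / 4) (by linarith) (by linarith)
      have h3 := hder_pos (x / 2) h2θ
      have h4 := mvt2 (3 * x / 4) x (by linarith) (by linarith)
      have h5 := hpos (3 * x / 4) htθ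
      have h6 := hmono' (x / 2) (3 * x / 4) (by linarith) (by linarith)
      nlinarith
  · intro x hx
    set S : Set ℝ := {s : ℝ | 0 < s ∧ 0 < φ' s} with hS
    have hSne : S.Nonempty := ⟨θ₀ + 1, by linarith, hder_pos _ (by linarith)⟩
    have hθ₁0 : 0 ≤ θ₁ := by
      rw [hθ₁]
      exact Real.sInf_nonneg (fun y hy => le_of_lt hy.1)
    have hx0 : 0 < x := by linarith
    obtain ⟨t, htS, htx⟩ : ∃ t ∈ S, t < x / 2 := by
      apply exists_lt_of_csInf_lt hSne
      rw [← hθ₁]; linarith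
    have h1 : 0 < φ' (x / 2) := lt_of_lt_of_le htS.2 (hmono' t (x / 2) htS.1 (le_of_lt htx))
    have h2 := mvt4 (x / 2) x (by linarith) (by linarith)
    nlinarith

end
end

section
/- (Corollary 3) There is a constant c > 0, depending only on θ₀, such that for all x ∈ (0, θ₀/2) ∪ (2θ₀, ∞) one has |φ(x)| ≥ c x² φ''(x). -/
open MeasureTheory Real Set Filter

noncomputable section

lemma aux_exp_lb (t : ℝ) : 1 - t ≤ Real.exp (-t) := by
  linarith [Real.add_one_le_exp (-t)]

lemma aux_exp_quad {t : ℝ} (ht : 0 ≤ t) : Real.exp (-t) ≤ 1 - t + t ^ 2 := by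
  have h1 : t + 1 ≤ Real.exp t := Real.add_one_le_exp t
  have h2 : Real.exp (-t) * Real.exp t = 1 := by rw [← Real.exp_add]; simp
  have h3 := Real.exp_pos (-t)
  nlinarith [mul_nonneg ht (mul_nonneg ht ht)]

lemma aux_sq_exp {l x : ℝ} (hl : 0 < l) (hx : 0 ≤ x) :
    x ^ 2 * Real.exp (-(l * x)) ≤ 4 / l ^ 2 := by
  have hlx : 0 ≤ l * x := mul_nonneg hl.le hx
  have hE : l * x / 2 ≤ Real.exp (l * x / 2) := by
    linarith [Real.add_one_le_exp (l * x / 2)]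
  have hEE : Real.exp (l * x / 2) * Real.exp (l * x / 2) = Real.exp (l * x) := by
    rw [← Real.exp_add]; ring_nf
  have h2 : (l * x / 2) ^ 2 ≤ Real.exp (l * x) := by
    rw [← hEE]
    have := mul_self_le_mul_self (by linarith) hE
    simpa [pow_two] using this
  have hA : Real.exp (-(l * x)) * Real.exp (l * x) = 1 := by
    rw [← Real.exp_add]; simp
  have hApos := Real.exp_pos (-(l * x))
  rw [le_div_iff₀ (by positivity)]
  have h3 := mul_le_mul_of_nonneg_left h2 hApos.le
  nlinarith [h3, hA]

lemma taylor_aux (f f' f'' : ℝ → ℝ)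
    (hD1 : ∀ x : ℝ, 0 < x → HasDerivAt f (f' x) x)
    (hD2 : ∀ x : ℝ, 0 < x → HasDerivAt f' (f'' x) x)
    (hanti : ∀ a c : ℝ, 0 < a → a ≤ c → f'' c ≤ f'' a) :
    (∀ v w : ℝ, 0 < v → v ≤ w → f v + f' v * (w - v) + f'' w / 2 * (w - v) ^ 2 ≤ f w) ∧
    (∀ u v : ℝ, 0 < u → u ≤ v → f v + f' v * (u - v) + f'' v / 2 * (u - v) ^ 2 ≤ f u) := by
  have hgd : ∀ (c t : ℝ), 0 < t → HasDerivAt (fun y => f' y - c * y) (f'' t - c) t := by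
    intro c t ht
    have hlin : HasDerivAt (fun y : ℝ => c * y) c t := by
      simpa using (hasDerivAt_id t).const_mul c
    exact (hD2 t ht).sub hlin
  have hFd : ∀ (v c t : ℝ), 0 < t →
      HasDerivAt (fun y => f y - (f v + f' v * (y - v) + c / 2 * (y - v) ^ 2))
        (f' t - (f' v + c * (t - v))) t := by
    intro v c t ht
    have h1 : HasDerivAt (fun y : ℝ => y - v) 1 t := (hasDerivAt_id t).sub_const v
    have h2 : HasDerivAt (fun y : ℝ => (y - v) ^ 2) (2 * (t - v)) t := by
      simpa using h1.fun_pow 2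
    have h3 : HasDerivAt (fun y => f v + f' v * (y - v) + c / 2 * (y - v) ^ 2)
        (f' v + c * (t - v)) t := by
      have := ((h1.const_mul (f' v)).const_add (f v)).fun_add (h2.const_mul (c / 2))
      exact this.congr_deriv (by ring)
    exact (hD1 t ht).sub h3
  have hgmono : ∀ (lo hi c : ℝ), 0 < lo → MonotoneOn (fun t => f' t - c * t) (Icc lo hi) →
      True := fun _ _ _ _ _ => trivial
  constructor
  · intro v w hv hvw
    rcases eq_or_lt_of_le hvw with rfl | hlt
    · simp
    have hg : MonotoneOn (fun t => f' t - f'' w * t) (Icc v w) := by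
      apply monotoneOn_of_deriv_nonneg (convex_Icc v w)
      · intro t ht
        exact (hgd (f'' w) t (hv.trans_le ht.1)).continuousAt.continuousWithinAt
      · intro t ht
        rw [interior_Icc] at ht
        exact (hgd (f'' w) t (hv.trans ht.1)).differentiableAt.differentiableWithinAt
      · intro t ht
        rw [interior_Icc] at ht
        rw [(hgd (f'' w) t (hv.trans ht.1)).deriv]
        have := hanti t w (hv.trans ht.1) ht.2.le
        linarith
    have hF : MonotoneOn (fun y => f y - (f v + f' v * (y - v) + f'' w / 2 * (y - v) ^ 2))
        (Icc v w) := by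
      apply monotoneOn_of_deriv_nonneg (convex_Icc v w)
      · intro t ht
        exact (hFd v (f'' w) t (hv.trans_le ht.1)).continuousAt.continuousWithinAt
      · intro t ht
        rw [interior_Icc] at ht
        exact (hFd v (f'' w) t (hv.trans ht.1)).differentiableAt.differentiableWithinAt
      · intro t ht
        rw [interior_Icc] at ht
        rw [(hFd v (f'' w) t (hv.trans ht.1)).deriv]
        have h5 := hg ⟨le_refl v, hvw⟩ ⟨ht.1.le, ht.2.le⟩ ht.1.le
        simp only at h5
        linarith
    have h6 := hF ⟨le_refl v, hvw⟩ ⟨hvw, le_refl w⟩ hvw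
    simp only at h6
    nlinarith [h6]
  · intro u v hu huv
    rcases eq_or_lt_of_le huv with rfl | hlt
    · simp
    have hg : MonotoneOn (fun t => f' t - f'' v * t) (Icc u v) := by
      apply monotoneOn_of_deriv_nonneg (convex_Icc u v)
      · intro t ht
        exact (hgd (f'' v) t (hu.trans_le ht.1)).continuousAt.continuousWithinAt
      · intro t ht
        rw [interior_Icc] at ht
        exact (hgd (f'' v) t (hu.trans ht.1)).differentiableAt.differentiableWithinAt
      · intro t ht
        rw [interior_Icc] at ht
        rw [(hgd (f'' v) t (hu.trans ht.1)).deriv]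
        have := hanti t v (hu.trans ht.1) ht.2.le
        linarith
    have hF : AntitoneOn (fun y => f y - (f v + f' v * (y - v) + f'' v / 2 * (y - v) ^ 2))
        (Icc u v) := by
      apply antitoneOn_of_deriv_nonpos (convex_Icc u v)
      · intro t ht
        exact (hFd v (f'' v) t (hu.trans_le ht.1)).continuousAt.continuousWithinAt
      · intro t ht
        rw [interior_Icc] at ht
        exact (hFd v (f'' v) t (hu.trans ht.1)).differentiableAt.differentiableWithinAt
      · intro t ht
        rw [interior_Icc] at ht
        rw [(hFd v (f'' v) t (hu.trans ht.1)).deriv]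
        have h5 := hg ⟨ht.1.le, ht.2.le⟩ ⟨huv, le_refl v⟩ ht.2.le
        simp only at h5
        linarith
    have h6 := hF ⟨le_refl u, huv⟩ ⟨huv, le_refl v⟩ huv
    simp only at h6
    nlinarith [h6]

set_option maxHeartbeats 3200000

/-- Corollary 3. -/
theorem statement2
    (ν : Measure ℝ) [SigmaFinite ν]
    (hint : ∫⁻ x in Ioi (0:ℝ), ENNReal.ofReal (min 1 (x ^ 2)) ∂ν ≠ ⊤)
    (σ b : ℝ) (hσ : 0 ≤ σ)
    (φ φ' φ'' : ℝ → ℝ)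
    (hφ : ∀ l : ℝ, 0 ≤ l → φ l = σ ^ 2 * l ^ 2 - b * l +
      ∫ x in Ioi (0:ℝ), (Real.exp (-(l * x)) - 1 + l * x * (if x < 1 then 1 else 0)) ∂ν)
    (hD1 : ∀ x : ℝ, 0 < x → HasDerivAt φ (φ' x) x)
    (hD2 : ∀ x : ℝ, 0 < x → HasDerivAt φ' (φ'' x) x)
    (hφ'' : ∀ l : ℝ, 0 < l → φ'' l = 2 * σ ^ 2 + ∫ x in Ioi (0:ℝ), x ^ 2 * Real.exp (-(l * x)) ∂ν)
    (hUV : 0 < σ ∨ ∫⁻ x in Ioo (0:ℝ) 1, ENNReal.ofReal x ∂ν = ⊤)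
    (θ₀ θ₁ : ℝ)
    (hθ₀ : IsGreatest {s : ℝ | 0 ≤ s ∧ φ s = 0} θ₀)
    (hθ₁ : θ₁ = sInf {s : ℝ | 0 < s ∧ 0 < φ' s})
    :
    ∃ c : ℝ, 0 < c ∧ ∀ x : ℝ, ((0 < x ∧ x < θ₀ / 2) ∨ 2 * θ₀ < x) →
      c * (x ^ 2 * φ'' x) ≤ |φ x| := by
  have hθ0nn : 0 ≤ θ₀ := hθ₀.1.1
  have hφθ₀ : φ θ₀ = 0 := hθ₀.1.2
  -- integrability of the reference function
  have hminnn : ∀ x : ℝ, 0 ≤ min 1 (x ^ 2) := fun x => le_min zero_le_one (sq_nonneg x)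
  have hIntMin : IntegrableOn (fun x : ℝ => min 1 (x ^ 2)) (Ioi 0) ν := by
    refine ⟨(measurable_const.min (measurable_id.pow_const 2)).aestronglyMeasurable, ?_⟩
    rw [hasFiniteIntegral_iff_ofReal (ae_of_all _ hminnn)]
    exact hint.lt_top
  have hDom : ∀ (f : ℝ → ℝ) (C : ℝ), AEStronglyMeasurable f (ν.restrict (Ioi 0)) →
      (∀ x ∈ Ioi (0:ℝ), ‖f x‖ ≤ C * min 1 (x ^ 2)) → IntegrableOn f (Ioi 0) ν := by
    intro f C hm hb
    exact Integrable.mono' (hIntMin.const_mul C) hm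
      ((ae_restrict_iff' measurableSet_Ioi).2 (ae_of_all _ hb))
  have hI2 : ∀ l : ℝ, 0 < l →
      IntegrableOn (fun x => x ^ 2 * Real.exp (-(l * x))) (Ioi 0) ν := by
    intro l hl
    apply hDom _ (max 1 (4 / l ^ 2))
    · exact ((measurable_id.pow_const 2).mul
        ((measurable_id.const_mul l).neg.exp)).aestronglyMeasurable
    · intro x hx
      have hx0 : (0:ℝ) < x := hx
      have hnn : 0 ≤ x ^ 2 * Real.exp (-(l * x)) := by positivity
      rw [Real.norm_of_nonneg hnn]
      rcases le_or_gt x 1 with h1 | h1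
      · have hm : min 1 (x ^ 2) = x ^ 2 := min_eq_right (by nlinarith)
        have he : Real.exp (-(l * x)) ≤ 1 := by
          rw [Real.exp_le_one_iff]; nlinarith
        rw [hm]
        calc x ^ 2 * Real.exp (-(l * x)) ≤ x ^ 2 * 1 := by nlinarith [Real.exp_pos (-(l*x))]
          _ ≤ max 1 (4 / l ^ 2) * x ^ 2 := by
              nlinarith [le_max_left (1:ℝ) (4 / l^2), sq_nonneg x]
      · have hm : min 1 (x ^ 2) = 1 := min_eq_left (by nlinarith)
        rw [hm, mul_one]
        exact le_trans (aux_sq_exp hl hx0.le) (le_max_right _ _)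
  have hIg : ∀ l : ℝ, 0 ≤ l → IntegrableOn
      (fun x => Real.exp (-(l * x)) - 1 + l * x * (if x < 1 then 1 else 0)) (Ioi 0) ν := by
    intro l hl
    apply hDom _ (max 1 (l ^ 2))
    · apply Measurable.aestronglyMeasurable
      exact ((measurable_id.const_mul l).neg.exp.sub measurable_const).add
        ((measurable_id.const_mul l).mul
          (Measurable.ite (measurableSet_Iio (a := (1:ℝ))) measurable_const measurable_const))
    · intro x hx
      have hx0 : (0:ℝ) < x := hx
      have hlx : 0 ≤ l * x := mul_nonneg hl hx0.le
      rcases lt_or_ge x 1 with h1 | h1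
      · rw [if_pos h1]
        have hlb := aux_exp_lb (l * x)
        have hub := aux_exp_quad hlx
        have hnn : 0 ≤ Real.exp (-(l * x)) - 1 + l * x * 1 := by linarith
        rw [Real.norm_of_nonneg hnn]
        have hm : min 1 (x ^ 2) = x ^ 2 := min_eq_right (by nlinarith)
        rw [hm]
        have : Real.exp (-(l * x)) - 1 + l * x * 1 ≤ l ^ 2 * x ^ 2 := by nlinarith
        nlinarith [le_max_right (1:ℝ) (l ^ 2), sq_nonneg x]
      · rw [if_neg (not_lt.2 h1)]
        have hm : min 1 (x ^ 2) = 1 := min_eq_left (by nlinarith)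
        rw [hm, mul_one]
        have he1 : Real.exp (-(l * x)) ≤ 1 := by
          rw [Real.exp_le_one_iff]; nlinarith
        have he0 := Real.exp_pos (-(l * x))
        rw [Real.norm_eq_abs, abs_le]
        constructor <;> [nlinarith [le_max_left (1:ℝ) (l^2)]; nlinarith [le_max_left (1:ℝ) (l^2)]]
  have hφ0 : φ 0 = 0 := by
    rw [hφ 0 le_rfl]
    simp
  set M : ℝ := ∫ x in Ioi (0:ℝ), min 1 (x ^ 2) ∂ν with hMdef
  have hM0 : 0 ≤ M := integral_nonneg fun x => hminnn x
  have hβ : ∀ s : ℝ, 0 ≤ s → φ s ≤ σ ^ 2 * s ^ 2 - b * s + s ^ 2 * M := by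
    intro s hs
    rw [hφ s hs]
    have hle : ∫ x in Ioi (0:ℝ), (Real.exp (-(s * x)) - 1 + s * x * (if x < 1 then 1 else 0)) ∂ν
        ≤ ∫ x in Ioi (0:ℝ), s ^ 2 * min 1 (x ^ 2) ∂ν := by
      apply integral_mono_ae (hIg s hs) (hIntMin.const_mul (s ^ 2))
      refine (ae_restrict_iff' measurableSet_Ioi).2 (ae_of_all _ fun x hx => ?_)
      have hx0 : (0:ℝ) < x := hx
      dsimp only
      rcases lt_or_ge x 1 with h1 | h1
      · rw [if_pos h1]
        have h2 := aux_exp_quad (mul_nonneg hs hx0.le)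
        have hm : min 1 (x ^ 2) = x ^ 2 := min_eq_right (by nlinarith)
        rw [hm]; nlinarith
      · rw [if_neg (not_lt.2 h1)]
        have he1 : Real.exp (-(s * x)) ≤ 1 := by
          rw [Real.exp_le_one_iff]; nlinarith
        have : 0 ≤ s ^ 2 * min 1 (x ^ 2) := mul_nonneg (sq_nonneg s) (hminnn x)
        nlinarith
    have heq : ∫ x in Ioi (0:ℝ), s ^ 2 * min 1 (x ^ 2) ∂ν = s ^ 2 * M :=
      integral_const_mul _ _
    linarith [hle, heq.le, heq.ge]
  have hφ''ge : ∀ l : ℝ, 0 < l → 2 * σ ^ 2 ≤ φ'' l := by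
    intro l hl
    rw [hφ'' l hl]
    have : 0 ≤ ∫ x in Ioi (0:ℝ), x ^ 2 * Real.exp (-(l * x)) ∂ν :=
      integral_nonneg fun x => by positivity
    linarith
  have hφ''nn : ∀ l : ℝ, 0 < l → 0 ≤ φ'' l := fun l hl => by
    nlinarith [hφ''ge l hl, sq_nonneg σ]
  have hanti : ∀ a c : ℝ, 0 < a → a ≤ c → φ'' c ≤ φ'' a := by
    intro a c ha hac
    rw [hφ'' a ha, hφ'' c (lt_of_lt_of_le ha hac)]
    have hmono : ∫ x in Ioi (0:ℝ), x ^ 2 * Real.exp (-(c * x)) ∂ν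
        ≤ ∫ x in Ioi (0:ℝ), x ^ 2 * Real.exp (-(a * x)) ∂ν := by
      apply integral_mono_of_nonneg (ae_of_all _ fun x => by positivity) (hI2 a ha)
      refine (ae_restrict_iff' measurableSet_Ioi).2 (ae_of_all _ fun x hx => ?_)
      have hx0 : (0:ℝ) < x := hx
      have he : Real.exp (-(c * x)) ≤ Real.exp (-(a * x)) := by
        apply Real.exp_le_exp.2; nlinarith
      dsimp only
      nlinarith [sq_nonneg x]
    linarith
  obtain ⟨hL1, hL2⟩ := taylor_aux φ φ' φ'' hD1 hD2 hanti
  -- tangent line bound at 0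
  have hTan : ∀ t : ℝ, 0 < t → φ t ≤ φ' t * t := by
    intro t ht
    have key : ∀ s ∈ Ioo (0:ℝ) t, φ t - φ' t * t ≤ σ ^ 2 * s ^ 2 - b * s + s ^ 2 * M - φ' t * s := by
      intro s hs
      have h2 := hL2 s t hs.1 hs.2.le
      have h3 := hβ s hs.1.le
      have h4 : 0 ≤ φ'' t / 2 * (s - t) ^ 2 :=
        mul_nonneg (div_nonneg (hφ''nn t ht) two_pos.le) (sq_nonneg _)
      nlinarith
    have hlim : Tendsto (fun s : ℝ => σ ^ 2 * s ^ 2 - b * s + s ^ 2 * M - φ' t * s)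
        (nhdsWithin 0 (Ioi 0)) (nhds 0) := by
      have hc : Continuous (fun s : ℝ => σ ^ 2 * s ^ 2 - b * s + s ^ 2 * M - φ' t * s) := by
        fun_prop
      have := (hc.tendsto 0).mono_left (nhdsWithin_le_nhds (s := Ioi (0:ℝ)))
      simpa using this
    have hev : ∀ᶠ s in nhdsWithin (0:ℝ) (Ioi 0),
        φ t - φ' t * t ≤ σ ^ 2 * s ^ 2 - b * s + s ^ 2 * M - φ' t * s :=
      Filter.eventually_of_mem (Ioo_mem_nhdsGT_of_mem ⟨le_refl 0, ht⟩) key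
    have := ge_of_tendsto hlim hev
    linarith
  have hneg : ∀ t : ℝ, 0 < t → t < θ₀ → φ t ≤ 0 := by
    intro t ht htθ
    have h1 := hL1 t θ₀ ht htθ.le
    rw [hφθ₀] at h1
    have h4 : 0 ≤ φ'' θ₀ / 2 * (θ₀ - t) ^ 2 :=
      mul_nonneg (div_nonneg (hφ''nn θ₀ (ht.trans htθ)) two_pos.le) (sq_nonneg _)
    rcases le_or_gt 0 (φ' t) with h | h
    · nlinarith [mul_nonneg h (sub_nonneg.2 htθ.le)]
    · have h5 := hTan t ht
      nlinarith [mul_nonpos_of_nonpos_of_nonneg h.le ht.le]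
  have hpos : ∀ v : ℝ, θ₀ < v → 0 ≤ φ v := by
    rcases eq_or_lt_of_le hθ0nn with hθz | hθp
    · -- θ₀ = 0
      intro v hv
      rw [← hθz] at hv
      by_contra hvneg
      push_neg at hvneg
      have hallneg : ∀ s : ℝ, 0 < s → φ s < 0 := by
        intro s hs
        rcases lt_trichotomy (φ s) 0 with h | h | h
        · exact h
        · exact absurd (hθ₀.2 ⟨hs.le, h⟩) (by rw [← hθz]; exact not_le.2 hs)
        · exfalso
          rcases lt_trichotomy v s with hvs | hvs | hvs
          · have hco : ContinuousOn φ (Icc v s) := fun y hy =>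
              (hD1 y (lt_of_lt_of_le hv hy.1)).continuousAt.continuousWithinAt
            obtain ⟨z, hz, hz0⟩ := intermediate_value_Ioo hvs.le hco ⟨hvneg, h⟩
            have hzpos : 0 < z := hv.trans hz.1
            exact absurd (hθ₀.2 ⟨hzpos.le, hz0⟩) (by rw [← hθz]; exact not_le.2 hzpos)
          · rw [hvs] at hvneg; linarith
          · have hco : ContinuousOn φ (Icc s v) := fun y hy =>
              (hD1 y (lt_of_lt_of_le hs hy.1)).continuousAt.continuousWithinAt
            obtain ⟨z, hz, hz0⟩ := intermediate_value_Ioo' hvs.le hco ⟨hvneg, h⟩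
            have hzpos : 0 < z := hs.trans hz.1
            exact absurd (hθ₀.2 ⟨hzpos.le, hz0⟩) (by rw [← hθz]; exact not_le.2 hzpos)
      rcases hUV with hσpos | hinf
      · -- σ > 0 : coercivity from the σ² term
        set A : ℝ := |φ 1| + |φ' 1| + 1 with hAdef
        set t : ℝ := max 1 (A / σ ^ 2) with htdef
        have ht1 : (1:ℝ) ≤ t := le_max_left _ _
        have ht0 : (0:ℝ) ≤ t := by linarith
        have hσ2 : 0 < σ ^ 2 := by positivity
        have htA : A ≤ σ ^ 2 * t := by
          have h1 : A / σ ^ 2 ≤ t := le_max_right _ _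
          calc A = σ ^ 2 * (A / σ ^ 2) := by field_simp
            _ ≤ σ ^ 2 * t := by nlinarith
        have h1 := hL1 1 (1 + t) one_pos (by linarith)
        have h2 := hφ''ge (1 + t) (by linarith)
        have h3 := hallneg (1 + t) (by linarith)
        have hA1 : -|φ 1| ≤ φ 1 := neg_abs_le _
        have hA2 : -|φ' 1| ≤ φ' 1 := neg_abs_le _
        have habs1 : 0 ≤ |φ 1| := abs_nonneg _
        have habs2 : 0 ≤ |φ' 1| := abs_nonneg _
        nlinarith [mul_le_mul_of_nonneg_right htA ht0, mul_le_mul_of_nonneg_right hA2 ht0,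
          mul_le_mul_of_nonneg_right h2 (sq_nonneg t), mul_nonneg (sub_nonneg.2 ht1) habs1]
      · -- infinite small-jump activity : coercivity from the compensated jumps
        have hν1fin : ν (Ici (1:ℝ)) < ⊤ := by
          have h2 : ∫⁻ x in Ici (1:ℝ), ENNReal.ofReal (min 1 (x ^ 2)) ∂ν = ν (Ici 1) := by
            rw [← setLIntegral_one]
            apply setLIntegral_congr_fun measurableSet_Ici
            refine fun x hx => ?_
            have h1x : (1:ℝ) ≤ x := hx
            dsimp only
            rw [min_eq_left (by nlinarith), ENNReal.ofReal_one]
          have h1 : ∫⁻ x in Ici (1:ℝ), ENNReal.ofReal (min 1 (x ^ 2)) ∂ν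
              ≤ ∫⁻ x in Ioi (0:ℝ), ENNReal.ofReal (min 1 (x ^ 2)) ∂ν :=
            lintegral_mono_set fun x hx => mem_Ioi.2 (lt_of_lt_of_le one_pos hx)
          rw [h2] at h1
          exact lt_of_le_of_lt h1 hint.lt_top
        set Cr : ℝ := (ν (Ici (1:ℝ))).toReal with hCrdef
        have hCr0 : 0 ≤ Cr := ENNReal.toReal_nonneg
        have hseq : ∀ K : ℝ, ∃ n : ℕ, ENNReal.ofReal K
            ≤ ∫⁻ x in Ico (1/((n:ℝ)+1)) 1, ENNReal.ofReal x ∂ν := by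
          intro K
          set f : ℕ → ℝ → ENNReal :=
            fun n => (Ici (1/((n:ℝ)+1))).indicator fun x => ENNReal.ofReal x with hfdef
          have hfm : ∀ n, Measurable (f n) :=
            fun n => ENNReal.measurable_ofReal.indicator measurableSet_Ici
          have hmono : Monotone f := by
            intro m n hmn x
            by_cases hx : x ∈ Ici (1/((m:ℝ)+1))
            · have h12 : (1/((n:ℝ)+1)) ≤ 1/((m:ℝ)+1) := by
                have hc : (m:ℝ) ≤ (n:ℝ) := Nat.cast_le.2 hmn
                apply one_div_le_one_div_of_le
                · positivity
                · linarith
              have hx' : x ∈ Ici (1/((n:ℝ)+1)) := le_trans h12 hx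
              simp only [hfdef, Set.indicator_of_mem hx, Set.indicator_of_mem hx']
              exact le_rfl
            · simp only [hfdef, Set.indicator_of_notMem hx]
              exact zero_le
          have hkey := lintegral_iSup (μ := ν.restrict (Ioo 0 1)) hfm hmono
          have hsupeq : ∫⁻ x, (⨆ n, f n x) ∂(ν.restrict (Ioo 0 1))
              = ∫⁻ x in Ioo (0:ℝ) 1, ENNReal.ofReal x ∂ν := by
            apply lintegral_congr_ae
            refine (ae_restrict_iff' measurableSet_Ioo).2 (ae_of_all _ fun x hx => ?_)
            apply le_antisymm
            · exact iSup_le fun n => Set.indicator_le_self _ _ x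
            · obtain ⟨n, hn⟩ := exists_nat_one_div_lt hx.1
              have heq : f n x = ENNReal.ofReal x := Set.indicator_of_mem (mem_Ici.2 hn.le) _
              rw [← heq]
              exact le_iSup (fun n => f n x) n
          have hfint : ∀ n : ℕ, ∫⁻ x, f n x ∂(ν.restrict (Ioo 0 1))
              = ∫⁻ x in Ico (1/((n:ℝ)+1)) 1, ENNReal.ofReal x ∂ν := by
            intro n
            have hset : Ici (1/((n:ℝ)+1)) ∩ Ioo (0:ℝ) 1 = Ico (1/((n:ℝ)+1)) 1 := by
              ext y
              simp only [mem_inter_iff, mem_Ici, mem_Ioo, mem_Ico]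
              constructor
              · rintro ⟨h1, h2, h3⟩; exact ⟨h1, h3⟩
              · rintro ⟨h1, h2⟩
                refine ⟨h1, lt_of_lt_of_le (by positivity) h1, h2⟩
            rw [hfdef]
            rw [lintegral_indicator measurableSet_Ici]
            rw [Measure.restrict_restrict measurableSet_Ici, hset]
          rw [hsupeq, hinf] at hkey
          have hlt : ENNReal.ofReal K < ⨆ n, ∫⁻ x, f n x ∂(ν.restrict (Ioo 0 1)) := by
            rw [← hkey]; exact ENNReal.ofReal_lt_top
          obtain ⟨n, hn⟩ := lt_iSup_iff.1 hlt
          exact ⟨n, by rw [← hfint n]; exact hn.le⟩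
        obtain ⟨n, hn⟩ := hseq (2 * (|b| + 1))
        set a : ℝ := 1/((n:ℝ)+1) with hadef
        have ha0 : 0 < a := by positivity
        have ha1 : a ≤ 1 := by
          rw [hadef, div_le_one (by positivity)]
          linarith [show (0:ℝ) ≤ (n:ℝ) from Nat.cast_nonneg n]
        have hνIco : ν (Ico a 1) < ⊤ := by
          by_contra hcon
          push_neg at hcon
          have htop : ν (Ico a 1) = ⊤ := top_le_iff.1 hcon
          have h1 : ENNReal.ofReal (a^2) * ν (Ico a 1)
              ≤ ∫⁻ x in Ioi (0:ℝ), ENNReal.ofReal (min 1 (x^2)) ∂ν := by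
            rw [← setLIntegral_const (Ico a 1) (ENNReal.ofReal (a^2))]
            calc ∫⁻ _ in Ico a 1, ENNReal.ofReal (a^2) ∂ν
                ≤ ∫⁻ x in Ico a 1, ENNReal.ofReal (min 1 (x^2)) ∂ν := by
                  apply lintegral_mono_ae
                  refine (ae_restrict_iff' measurableSet_Ico).2 (ae_of_all _ fun x hx => ?_)
                  apply ENNReal.ofReal_le_ofReal
                  have hx1 : a ≤ x := hx.1
                  have hx2 : x < 1 := hx.2
                  exact le_min (by nlinarith) (by nlinarith)
              _ ≤ ∫⁻ x in Ioi (0:ℝ), ENNReal.ofReal (min 1 (x^2)) ∂ν :=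
                  lintegral_mono_set fun x hx => lt_of_lt_of_le ha0 hx.1
          rw [htop, ENNReal.mul_top (ENNReal.ofReal_pos.2 (by positivity)).ne'] at h1
          exact hint (top_le_iff.1 h1)
        have hJint : IntegrableOn (fun x : ℝ => x) (Ico a 1) ν := by
          apply Measure.integrableOn_of_bounded hνIco.ne measurable_id.aestronglyMeasurable (M := 1)
          refine (ae_restrict_iff' measurableSet_Ico).2 (ae_of_all _ fun x hx => ?_)
          have : id x = x := rfl
          rw [this, Real.norm_of_nonneg (le_trans ha0.le hx.1)]
          exact hx.2.le
        set J : ℝ := ∫ x in Ico a 1, x ∂ν with hJdef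
        have hJ0 : 0 ≤ J := setIntegral_nonneg measurableSet_Ico fun x hx => le_trans ha0.le hx.1
        have hJlb : 2 * (|b| + 1) ≤ J := by
          have h1 : ENNReal.ofReal J = ∫⁻ x in Ico a 1, ENNReal.ofReal x ∂ν :=
            ofReal_integral_eq_lintegral_ofReal hJint
              ((ae_restrict_iff' measurableSet_Ico).2 (ae_of_all _ fun x hx => le_trans ha0.le hx.1))
          rw [← h1] at hn
          exact (ENNReal.ofReal_le_ofReal_iff hJ0).1 hn
        set l : ℝ := max (2*((n:ℝ)+1)) (Cr + 1) with hldef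
        have hl2 : 2*((n:ℝ)+1) ≤ l := le_max_left _ _
        have hlC : Cr + 1 ≤ l := le_max_right _ _
        have hl0 : (0:ℝ) < l := lt_of_lt_of_le (by positivity) hl2
        have hioo : IntegrableOn
            (fun x => Real.exp (-(l * x)) - 1 + l * x * (if x < 1 then 1 else 0)) (Ioo 0 1) ν :=
          (hIg l hl0.le).mono_set (fun x hx => hx.1)
        have hici : IntegrableOn
            (fun x => Real.exp (-(l * x)) - 1 + l * x * (if x < 1 then 1 else 0)) (Ici 1) ν :=
          (hIg l hl0.le).mono_set (fun x hx => mem_Ioi.2 (lt_of_lt_of_le one_pos hx))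
        have hdisj : Disjoint (Ioo (0:ℝ) 1) (Ici (1:ℝ)) := by
          rw [Set.disjoint_left]
          intro x hx h1x
          exact absurd hx.2 (not_lt.2 h1x)
        have hsplit : ∫ x in Ioi (0:ℝ), (Real.exp (-(l * x)) - 1 + l * x * (if x < 1 then 1 else 0)) ∂ν
            = (∫ x in Ioo (0:ℝ) 1, (Real.exp (-(l * x)) - 1 + l * x * (if x < 1 then 1 else 0)) ∂ν)
            + ∫ x in Ici (1:ℝ), (Real.exp (-(l * x)) - 1 + l * x * (if x < 1 then 1 else 0)) ∂ν := by
          rw [← setIntegral_union hdisj measurableSet_Ici hioo hici, Ioo_union_Ici_eq_Ioi zero_lt_one]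
        have hIcilb : -Cr ≤ ∫ x in Ici (1:ℝ),
            (Real.exp (-(l * x)) - 1 + l * x * (if x < 1 then 1 else 0)) ∂ν := by
          have h1 : ∫ x in Ici (1:ℝ), (-1 : ℝ) ∂ν ≤ ∫ x in Ici (1:ℝ),
              (Real.exp (-(l * x)) - 1 + l * x * (if x < 1 then 1 else 0)) ∂ν := by
            apply setIntegral_mono_on (integrableOn_const hν1fin.ne) hici measurableSet_Ici
            intro x hx
            have h1x : (1:ℝ) ≤ x := hx
            rw [if_neg (not_lt.2 h1x)]
            have := Real.exp_pos (-(l * x))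
            nlinarith
          rw [setIntegral_const, measureReal_def] at h1
          simp only [smul_eq_mul, mul_neg_one] at h1
          rw [hCrdef]
          linarith
        have hseteq : Ici a ∩ Ioo (0:ℝ) 1 = Ico a 1 := by
          ext y
          simp only [mem_inter_iff, mem_Ici, mem_Ioo, mem_Ico]
          constructor
          · rintro ⟨h1, h2, h3⟩; exact ⟨h1, h3⟩
          · rintro ⟨h1, h2⟩; exact ⟨h1, lt_of_lt_of_le ha0 h1, h2⟩
        have hIoolb : l/2 * J ≤ ∫ x in Ioo (0:ℝ) 1,
            (Real.exp (-(l * x)) - 1 + l * x * (if x < 1 then 1 else 0)) ∂ν := by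
          have hk_int : IntegrableOn ((Ici a).indicator (fun x : ℝ => l/2 * x)) (Ioo 0 1) ν := by
            rw [IntegrableOn, integrable_indicator_iff measurableSet_Ici]
            rw [IntegrableOn, Measure.restrict_restrict measurableSet_Ici, hseteq]
            exact hJint.const_mul _
          have h2 : ∫ x in Ioo (0:ℝ) 1, (Ici a).indicator (fun x : ℝ => l/2 * x) x ∂ν
              ≤ ∫ x in Ioo (0:ℝ) 1,
                (Real.exp (-(l * x)) - 1 + l * x * (if x < 1 then 1 else 0)) ∂ν := by
            apply setIntegral_mono_on hk_int hioo measurableSet_Ioo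
            intro x hx
            by_cases hax : x ∈ Ici a
            · rw [Set.indicator_of_mem hax]
              rw [if_pos hx.2]
              have haxle : a ≤ x := hax
              have h3 : 2*((n:ℝ)+1) * a ≤ l * x :=
                mul_le_mul hl2 haxle ha0.le (le_trans (by positivity) hl2)
              have h4 : 2*((n:ℝ)+1) * a = 2 := by
                rw [hadef]; field_simp
              have hlx : 2 ≤ l * x := by linarith
              have hexp := Real.exp_pos (-(l * x))
              nlinarith
            · rw [Set.indicator_of_notMem hax, if_pos hx.2]
              have := aux_exp_lb (l * x)
              linarith
          have h3 : ∫ x in Ioo (0:ℝ) 1, (Ici a).indicator (fun x : ℝ => l/2 * x) x ∂ν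
              = l/2 * J := by
            rw [setIntegral_indicator measurableSet_Ici]
            rw [show Ioo (0:ℝ) 1 ∩ Ici a = Ico a 1 from by rw [Set.inter_comm]; exact hseteq]
            exact integral_const_mul _ _
          linarith
        have hφl : 0 < φ l := by
          rw [hφ l hl0.le, hsplit]
          have hb1 : b * l ≤ |b| * l := mul_le_mul_of_nonneg_right (le_abs_self b) hl0.le
          have hJl : l/2 * (2*(|b|+1)) ≤ l/2 * J := mul_le_mul_of_nonneg_left hJlb (by positivity)
          nlinarith [mul_nonneg (sq_nonneg σ) (sq_nonneg l), abs_nonneg b]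
        exact absurd hφl (not_lt.2 (hallneg l hl0).le)
    · -- θ₀ > 0
      intro v hv
      have hφ'θ : 0 ≤ φ' θ₀ := by
        have h1 := hTan θ₀ hθp
        rw [hφθ₀] at h1
        by_contra hcon
        push_neg at hcon
        nlinarith
      have h1 := hL1 θ₀ v hθp hv.le
      rw [hφθ₀] at h1
      have h4 : 0 ≤ φ'' v / 2 * (v - θ₀) ^ 2 :=
        mul_nonneg (div_nonneg (hφ''nn v (hθp.trans hv)) two_pos.le) (sq_nonneg _)
      nlinarith [mul_nonneg hφ'θ (sub_nonneg.2 hv.le)]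
  -- final assembly
  refine ⟨1/16, by norm_num, ?_⟩
  rintro x (⟨hx0, hxθ⟩ | hxθ)
  · -- 0 < x < θ₀/2
    have hθpos : 0 < θ₀ := by linarith
    have hw32 : 3/2*x < θ₀ := by linarith
    have hL1a := hL1 x (3/2*x) hx0 (by linarith)
    have hL2a := hL2 (x/2) x (by linarith) (by linarith)
    have hn1 := hneg (3/2*x) (by linarith) hw32
    have hn2 := hneg (x/2) (by linarith) (by linarith)
    have hw'' : 0 ≤ φ'' (3/2*x) := hφ''nn _ (by linarith)
    have hx'' : 0 ≤ φ'' x := hφ''nn _ hx0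
    have key : 1/16 * (x^2 * φ'' x) ≤ -φ x := by
      nlinarith [mul_nonneg hw'' (sq_nonneg x), mul_nonneg hx'' (sq_nonneg x)]
    exact key.trans (neg_le_abs _)
  · -- 2θ₀ < x
    have hx0 : 0 < x := lt_of_le_of_lt (by linarith) hxθ
    have hhalf : θ₀ < x/2 := by linarith
    have hp1 : 0 ≤ φ (x/2) := hpos _ hhalf
    have hp2 : 0 ≤ φ' (x/2) := by
      have h1 := hTan (x/2) (by linarith)
      by_contra hcon
      push_neg at hcon
      nlinarith
    have hL1b := hL1 (x/2) x (by linarith) (by linarith)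
    have hx'' : 0 ≤ φ'' x := hφ''nn _ hx0
    have key : 1/16 * (x^2 * φ'' x) ≤ φ x := by
      nlinarith [mul_nonneg hp2 (by linarith : (0:ℝ) ≤ x/2), mul_nonneg hx'' (sq_nonneg x)]
    exact key.trans (le_abs_self _)

end
end

section
/- (Corollary 4) Suppose φ'' ∈ WLSC(α−2, c, x₀) for some c ∈ (0,1], x₀ ≥ 0 and α > 0. Then there is a constant c₁ ∈ (0,1] such that for all x > x₀, c₁ x² φ''(x) ≤ K(1/x) ≤ e x² φ''(x), where the upper bound K(1/x) ≤ e x² φ''(x) holds for all x > 0 without the scaling assumption. -/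
open MeasureTheory Real Set Filter

noncomputable section

lemma aux_sq_exp_le {t s : ℝ} (ht : 0 < t) (hs : 0 < s) :
    s ^ 2 * Real.exp (-(t * s)) ≤ max 1 (256 / t ^ 4) * min 1 (s ^ 2) := by
  rcases le_or_gt s 1 with h | h
  · have h1 : min 1 (s ^ 2) = s ^ 2 := min_eq_right (by nlinarith)
    have h2 : Real.exp (-(t * s)) ≤ 1 := Real.exp_le_one_iff.2 (by nlinarith)
    have h3 : (1:ℝ) ≤ max 1 (256 / t ^ 4) := le_max_left _ _
    rw [h1]
    nlinarith [sq_nonneg s, Real.exp_pos (-(t * s))]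
  · have h1 : min 1 (s ^ 2) = 1 := min_eq_left (by nlinarith)
    rw [h1, mul_one]
    have hts : 0 < t * s := mul_pos ht hs
    have h2 : t * s / 4 ≤ Real.exp (t * s / 4) := by
      nlinarith [Real.add_one_le_exp (t * s / 4)]
    have h3 : (t * s / 4) ^ 4 ≤ Real.exp (t * s) := by
      calc (t * s / 4) ^ 4 ≤ Real.exp (t * s / 4) ^ 4 := by
            exact pow_le_pow_left₀ (by positivity) h2 4
        _ = Real.exp (t * s) := by
            rw [← Real.exp_nat_mul]; push_cast; ring_nf
    have h5 : t ^ 4 * s ^ 4 ≤ 256 * Real.exp (t * s) := by nlinarith [h3]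
    have h6 : s ^ 2 ≤ s ^ 4 := by nlinarith [sq_nonneg s, sq_nonneg (s^2 - s)]
    have key : s ^ 2 * t ^ 4 ≤ 256 * Real.exp (t * s) := by
      nlinarith [h5, mul_le_mul_of_nonneg_right h6 (by positivity : (0:ℝ) ≤ t ^ 4)]
    have h4 : s ^ 2 * Real.exp (-(t * s)) ≤ 256 / t ^ 4 := by
      rw [le_div_iff₀ (by positivity : (0:ℝ) < t ^ 4)]
      have hmul : Real.exp (-(t * s)) * Real.exp (t * s) = 1 := by
        rw [← Real.exp_add]; simp
      nlinarith [mul_le_mul_of_nonneg_right key (Real.exp_pos (-(t * s))).le, hmul,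
        Real.exp_pos (-(t * s))]
    exact h4.trans (le_max_right _ _)

set_option maxHeartbeats 1000000 in
theorem statement7'
    (ν : Measure ℝ) [SigmaFinite ν]
    (hint : ∫⁻ x in Ioi (0:ℝ), ENNReal.ofReal (min 1 (x ^ 2)) ∂ν ≠ ⊤)
    (σ b : ℝ) (hσ : 0 ≤ σ)
    (φ φ' φ'' : ℝ → ℝ)
    (hφ : ∀ l : ℝ, 0 ≤ l → φ l = σ ^ 2 * l ^ 2 - b * l +
      ∫ x in Ioi (0:ℝ), (Real.exp (-(l * x)) - 1 + l * x * (if x < 1 then 1 else 0)) ∂ν)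
    (hD1 : ∀ x : ℝ, 0 < x → HasDerivAt φ (φ' x) x)
    (hD2 : ∀ x : ℝ, 0 < x → HasDerivAt φ' (φ'' x) x)
    (hφ'' : ∀ l : ℝ, 0 < l → φ'' l = 2 * σ ^ 2 + ∫ x in Ioi (0:ℝ), x ^ 2 * Real.exp (-(l * x)) ∂ν)
    (α c x₀ : ℝ) (hα : 0 < α) (hc : c ∈ Ioc (0:ℝ) 1) (hx₀ : 0 ≤ x₀)
    (hscal : ∀ l : ℝ, 1 ≤ l → ∀ x : ℝ, x₀ < x → c * l ^ (α - 2) * φ'' x ≤ φ'' (l * x)) :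
    (∃ c₁ : ℝ, c₁ ∈ Ioc (0:ℝ) 1 ∧ ∀ x : ℝ, x₀ < x →
      c₁ * (x ^ 2 * φ'' x) ≤ σ ^ 2 / (x⁻¹) ^ 2 + (∫ s in Ioo (0:ℝ) x⁻¹, s ^ 2 ∂ν) / (x⁻¹) ^ 2) ∧
    (∀ x : ℝ, 0 < x → σ ^ 2 / (x⁻¹) ^ 2 + (∫ s in Ioo (0:ℝ) x⁻¹, s ^ 2 ∂ν) / (x⁻¹) ^ 2
      ≤ Real.exp 1 * (x ^ 2 * φ'' x)) := by
  obtain ⟨hc0, hc1⟩ := hc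
  -- base integrability
  have hmin : IntegrableOn (fun s : ℝ => min 1 (s ^ 2)) (Ioi 0) ν := by
    refine ⟨(continuous_const.min (continuous_pow 2)).aestronglyMeasurable, ?_⟩
    have hnn : ∀ s : ℝ, ‖min 1 (s ^ 2)‖ₑ = ENNReal.ofReal (min 1 (s ^ 2)) :=
      fun s => Real.enorm_eq_ofReal (le_min zero_le_one (sq_nonneg s))
    rw [HasFiniteIntegral]
    simp_rw [hnn]
    exact lt_top_iff_ne_top.2 hint
  have hJ : ∀ t : ℝ, 0 < t →
      IntegrableOn (fun s : ℝ => s ^ 2 * Real.exp (-(t * s))) (Ioi 0) ν := by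
    intro t ht
    refine Integrable.mono' (hmin.const_mul (max 1 (256 / t ^ 4))) (((continuous_pow 2).mul (Real.continuous_exp.comp ((continuous_const.mul continuous_id).neg))).aestronglyMeasurable)
      (((ae_restrict_iff' measurableSet_Ioi).2 (ae_of_all _ ?_)))
    intro s hs
    rw [Real.norm_eq_abs, abs_of_nonneg (by positivity)]
    exact aux_sq_exp_le ht hs
  have hAint : ∀ r : ℝ, 0 < r → IntegrableOn (fun s : ℝ => s ^ 2) (Ioo 0 r) ν := by
    intro r hr
    refine Integrable.mono' ((hmin.mono_set Ioo_subset_Ioi_self).const_mul (max 1 (r ^ 2)))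
      ((continuous_pow 2).aestronglyMeasurable)
      (((ae_restrict_iff' measurableSet_Ioo).2 (ae_of_all _ ?_)))
    rintro s ⟨hs0, hsr⟩
    rw [Real.norm_eq_abs, abs_of_nonneg (sq_nonneg s)]
    rcases le_or_gt s 1 with h | h
    · have h1 : min 1 (s ^ 2) = s ^ 2 := min_eq_right (by nlinarith)
      rw [h1]
      nlinarith [le_max_left 1 (r ^ 2), sq_nonneg s]
    · have h1 : min 1 (s ^ 2) = 1 := min_eq_left (by nlinarith)
      rw [h1, mul_one]
      have h2 : s ^ 2 ≤ r ^ 2 := by nlinarith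
      exact h2.trans (le_max_right _ _)
  -- splitting
  have hdisj : ∀ r : ℝ, Disjoint (Ioo (0:ℝ) r) (Ici r) := by
    intro r
    rw [Set.disjoint_left]
    exact fun a ha hb => absurd hb (not_le.2 ha.2)
  have hIcisub : ∀ r : ℝ, 0 < r → Ici r ⊆ Ioi (0:ℝ) := fun r hr a ha => lt_of_lt_of_le hr ha
  have hsplit : ∀ t : ℝ, 0 < t → ∀ r : ℝ, 0 < r →
      (∫ s in Ioi (0:ℝ), s ^ 2 * Real.exp (-(t * s)) ∂ν)
        = (∫ s in Ioo (0:ℝ) r, s ^ 2 * Real.exp (-(t * s)) ∂ν)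
          + ∫ s in Ici r, s ^ 2 * Real.exp (-(t * s)) ∂ν := by
    intro t ht r hr
    rw [← Ioo_union_Ici_eq_Ioi hr,
      setIntegral_union (hdisj r) measurableSet_Ici
        ((hJ t ht).mono_set Ioo_subset_Ioi_self) ((hJ t ht).mono_set (hIcisub r hr))]
  -- upper bound (all x > 0)
  have hupper : ∀ x : ℝ, 0 < x →
      σ ^ 2 / (x⁻¹) ^ 2 + (∫ s in Ioo (0:ℝ) x⁻¹, s ^ 2 ∂ν) / (x⁻¹) ^ 2
        ≤ Real.exp 1 * (x ^ 2 * φ'' x) := by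
    intro x hx
    have hr : 0 < x⁻¹ := inv_pos.2 hx
    rw [inv_pow, div_inv_eq_mul, div_inv_eq_mul, hφ'' x hx]
    have hAleJ : (∫ s in Ioo (0:ℝ) x⁻¹, s ^ 2 ∂ν)
        ≤ Real.exp 1 * ∫ s in Ioi (0:ℝ), s ^ 2 * Real.exp (-(x * s)) ∂ν := by
      have step1 : (∫ s in Ioo (0:ℝ) x⁻¹, s ^ 2 ∂ν)
          ≤ ∫ s in Ioo (0:ℝ) x⁻¹, Real.exp 1 * (s ^ 2 * Real.exp (-(x * s))) ∂ν := by
        refine setIntegral_mono_on (hAint _ hr)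
          (((hJ x hx).mono_set Ioo_subset_Ioi_self).const_mul _) measurableSet_Ioo ?_
        rintro s ⟨hs0, hsr⟩
        have h1 : x * s ≤ 1 := by
          have : x * s ≤ x * x⁻¹ := by nlinarith
          rwa [mul_inv_cancel₀ hx.ne'] at this
        have h2 : Real.exp (x * s) ≤ Real.exp 1 := Real.exp_le_exp.2 h1
        have h3 : Real.exp (x * s) * Real.exp (-(x * s)) = 1 := by
          rw [← Real.exp_add]; simp
        nlinarith [sq_nonneg s, Real.exp_pos (-(x * s)),
          mul_le_mul_of_nonneg_right h2 (Real.exp_pos (-(x * s))).le]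
      have step2 : (∫ s in Ioo (0:ℝ) x⁻¹, Real.exp 1 * (s ^ 2 * Real.exp (-(x * s))) ∂ν)
          = Real.exp 1 * ∫ s in Ioo (0:ℝ) x⁻¹, s ^ 2 * Real.exp (-(x * s)) ∂ν :=
        integral_const_mul _ _
      have step3 : (∫ s in Ioo (0:ℝ) x⁻¹, s ^ 2 * Real.exp (-(x * s)) ∂ν)
          ≤ ∫ s in Ioi (0:ℝ), s ^ 2 * Real.exp (-(x * s)) ∂ν := by
        refine setIntegral_mono_set (hJ x hx) (ae_of_all _ fun s => by positivity)
          (HasSubset.Subset.eventuallyLE Ioo_subset_Ioi_self)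
      calc (∫ s in Ioo (0:ℝ) x⁻¹, s ^ 2 ∂ν)
          ≤ Real.exp 1 * ∫ s in Ioo (0:ℝ) x⁻¹, s ^ 2 * Real.exp (-(x * s)) ∂ν := by
            rw [← step2]; exact step1
        _ ≤ Real.exp 1 * ∫ s in Ioi (0:ℝ), s ^ 2 * Real.exp (-(x * s)) ∂ν :=
            mul_le_mul_of_nonneg_left step3 (Real.exp_pos 1).le
    have he1 : (1:ℝ) ≤ Real.exp 1 := by nlinarith [Real.add_one_le_exp 1]
    nlinarith [mul_le_mul_of_nonneg_right hAleJ (sq_nonneg x),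
      mul_nonneg (sq_nonneg σ) (sq_nonneg x), sq_nonneg x, sq_nonneg σ]
  refine ⟨?_, hupper⟩
  -- choose L
  obtain ⟨L, hL1, hLe⟩ : ∃ L : ℝ, 1 ≤ L ∧ Real.exp (1 - L) * L ^ 2 ≤ c / 2 := by
    have h0 : (0:ℝ) < c / (2 * Real.exp 1) := by positivity
    have ht := (tendsto_pow_mul_exp_neg_atTop_nhds_zero 2).eventually (gt_mem_nhds h0)
    obtain ⟨L, hL2, hL1⟩ := (ht.and (eventually_ge_atTop (1:ℝ))).exists
    refine ⟨L, hL1, ?_⟩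
    have hE : Real.exp (1 - L) = Real.exp 1 * Real.exp (-L) := by
      rw [← Real.exp_add]; ring_nf
    have hE1 := Real.exp_pos 1
    calc Real.exp (1 - L) * L ^ 2 = Real.exp 1 * (L ^ 2 * Real.exp (-L)) := by rw [hE]; ring
      _ ≤ Real.exp 1 * (c / (2 * Real.exp 1)) := by nlinarith [hL2.le]
      _ = c / 2 := by field_simp
  have hL0 : (0:ℝ) < L := lt_of_lt_of_le one_pos hL1
  have hβ0 : 0 < c * L ^ (α - 2) := mul_pos hc0 (Real.rpow_pos_of_pos hL0 _)
  have hδβ : Real.exp (1 - L) ≤ c * L ^ (α - 2) / 2 := by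
    have h1 : L ^ ((-2):ℝ) ≤ L ^ (α - 2) :=
      Real.rpow_le_rpow_of_exponent_le hL1 (by linarith)
    have h2 : L ^ ((-2):ℝ) = (L ^ 2)⁻¹ := by
      rw [show ((-2):ℝ) = -((2:ℕ):ℝ) by norm_num, Real.rpow_neg hL0.le, Real.rpow_natCast]
    have hL2 : (0:ℝ) < L ^ 2 := by positivity
    have h3 : Real.exp (1 - L) ≤ c / 2 * (L ^ 2)⁻¹ := by
      rw [← div_eq_mul_inv, le_div_iff₀ hL2]
      linarith [hLe]
    calc Real.exp (1 - L) ≤ c / 2 * (L ^ 2)⁻¹ := h3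
      _ = c / 2 * L ^ ((-2):ℝ) := by rw [h2]
      _ ≤ c / 2 * L ^ (α - 2) := by nlinarith [h1, hc0]
      _ = c * L ^ (α - 2) / 2 := by ring
  set β := c * L ^ (α - 2) with hβdef
  refine ⟨(2 * (1 + 2 / β))⁻¹, ⟨by positivity, ?_⟩, ?_⟩
  · have h1 : (1:ℝ) ≤ 2 * (1 + 2 / β) := by nlinarith [div_pos two_pos hβ0]
    exact inv_le_one_of_one_le₀ h1
  intro x hx
  have hx0 : 0 < x := lt_of_le_of_lt hx₀ hx
  have hr : 0 < x⁻¹ := inv_pos.2 hx0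
  have hLx : 0 < L * x := mul_pos hL0 hx0
  set A := ∫ s in Ioo (0:ℝ) x⁻¹, s ^ 2 ∂ν with hAdef
  set A' := ∫ s in Ioo (0:ℝ) x⁻¹, s ^ 2 * Real.exp (-(x * s)) ∂ν with hA'def
  set T := ∫ s in Ici x⁻¹, s ^ 2 * Real.exp (-(x * s)) ∂ν with hTdef
  have hsplit1 := hsplit x hx0 x⁻¹ hr
  have hsplit2 := hsplit (L * x) hLx x⁻¹ hr
  have hA'A : A' ≤ A := by
    refine setIntegral_mono_on ((hJ x hx0).mono_set Ioo_subset_Ioi_self) (hAint _ hr)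
      measurableSet_Ioo ?_
    rintro s ⟨hs0, hsr⟩
    have hexp : Real.exp (-(x * s)) ≤ 1 := by
      apply Real.exp_le_one_iff.2
      have h9 : 0 ≤ x * s := by positivity
      linarith
    nlinarith [mul_le_mul_of_nonneg_left hexp (sq_nonneg s)]
  have h1L : (∫ s in Ioo (0:ℝ) x⁻¹, s ^ 2 * Real.exp (-(L * x * s)) ∂ν) ≤ A := by
    refine setIntegral_mono_on ((hJ (L * x) hLx).mono_set Ioo_subset_Ioi_self) (hAint _ hr)
      measurableSet_Ioo ?_
    rintro s ⟨hs0, hsr⟩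
    have hexp : Real.exp (-(L * x * s)) ≤ 1 := by
      apply Real.exp_le_one_iff.2
      have h9 : 0 ≤ L * x * s := by positivity
      linarith
    nlinarith [mul_le_mul_of_nonneg_left hexp (sq_nonneg s)]
  have h2L : (∫ s in Ici x⁻¹, s ^ 2 * Real.exp (-(L * x * s)) ∂ν) ≤ Real.exp (1 - L) * T := by
    have step : (∫ s in Ici x⁻¹, s ^ 2 * Real.exp (-(L * x * s)) ∂ν)
        ≤ ∫ s in Ici x⁻¹, Real.exp (1 - L) * (s ^ 2 * Real.exp (-(x * s))) ∂ν := by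
      refine setIntegral_mono_on ((hJ (L * x) hLx).mono_set (hIcisub _ hr))
        (((hJ x hx0).mono_set (hIcisub _ hr)).const_mul _) measurableSet_Ici ?_
      intro s hs
      have hs0 : 0 < s := lt_of_lt_of_le hr hs
      have hs' : x⁻¹ ≤ s := hs
      have hxs : 1 ≤ x * s := by
        have h1 : x * x⁻¹ ≤ x * s := mul_le_mul_of_nonneg_left hs' hx0.le
        rwa [mul_inv_cancel₀ hx0.ne'] at h1
      have key : Real.exp (-(L * x * s)) ≤ Real.exp (1 - L) * Real.exp (-(x * s)) := by
        rw [← Real.exp_add]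
        apply Real.exp_le_exp.2
        nlinarith [mul_nonneg (sub_nonneg.2 hL1) (sub_nonneg.2 hxs)]
      nlinarith [mul_le_mul_of_nonneg_left key (sq_nonneg s)]
    calc (∫ s in Ici x⁻¹, s ^ 2 * Real.exp (-(L * x * s)) ∂ν)
        ≤ ∫ s in Ici x⁻¹, Real.exp (1 - L) * (s ^ 2 * Real.exp (-(x * s))) ∂ν := step
      _ = Real.exp (1 - L) * T := integral_const_mul _ _
  have hW := hscal L hL1 x hx
  rw [hφ'' x hx0, hφ'' (L * x) hLx, hsplit1, hsplit2] at hW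
  have hTnn : 0 ≤ T := setIntegral_nonneg measurableSet_Ici fun s hs => by positivity
  have hA'nn : 0 ≤ A' := setIntegral_nonneg measurableSet_Ioo fun s hs => by positivity
  have hAnn : 0 ≤ A := by
    rw [hAdef]; exact setIntegral_nonneg measurableSet_Ioo fun s hs => by positivity
  have hβT : β * T ≤ 2 * σ ^ 2 + A + Real.exp (1 - L) * T := by
    have e1 : β * T ≤ β * (2 * σ ^ 2 + (A' + T)) := by nlinarith [hβ0, sq_nonneg σ, hA'nn]
    have e2 : β * (2 * σ ^ 2 + (A' + T)) ≤ 2 * σ ^ 2 + A + Real.exp (1 - L) * T := by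
      calc β * (2 * σ ^ 2 + (A' + T)) ≤ 2 * σ ^ 2
            + ((∫ s in Ioo (0:ℝ) x⁻¹, s ^ 2 * Real.exp (-(L * x * s)) ∂ν)
              + ∫ s in Ici x⁻¹, s ^ 2 * Real.exp (-(L * x * s)) ∂ν) := hW
        _ ≤ 2 * σ ^ 2 + A + Real.exp (1 - L) * T := by linarith [h1L, h2L]
    linarith
  have hT2 : T ≤ 2 / β * (2 * σ ^ 2 + A) := by
    have hgoal : T * β ≤ 2 * (2 * σ ^ 2 + A) := by
      nlinarith [hβT, mul_le_mul_of_nonneg_right hδβ hTnn]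
    rw [show 2 / β * (2 * σ ^ 2 + A) = 2 * (2 * σ ^ 2 + A) / β by ring]
    exact (le_div_iff₀ hβ0).2 hgoal
  rw [inv_pow, div_inv_eq_mul, div_inv_eq_mul, hφ'' x hx0, hsplit1]
  have hγ : 0 < 2 / β := by positivity
  have e1 : 2 * σ ^ 2 + (A' + T) ≤ (2 * (1 + 2 / β)) * (σ ^ 2 + A) := by
    nlinarith [hT2, hA'A, hAnn, hγ, sq_nonneg σ, mul_nonneg hγ.le hAnn]
  have key : x ^ 2 * (2 * σ ^ 2 + (A' + T)) ≤ (2 * (1 + 2 / β)) * (σ ^ 2 * x ^ 2 + A * x ^ 2) := by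
    nlinarith [mul_le_mul_of_nonneg_left e1 (sq_nonneg x)]
  calc (2 * (1 + 2 / β))⁻¹ * (x ^ 2 * (2 * σ ^ 2 + (A' + T)))
      ≤ (2 * (1 + 2 / β))⁻¹ * ((2 * (1 + 2 / β)) * (σ ^ 2 * x ^ 2 + A * x ^ 2)) := by
        apply mul_le_mul_of_nonneg_left key (by positivity)
    _ = σ ^ 2 * x ^ 2 + A * x ^ 2 := by
        have : (0:ℝ) < 2 * (1 + 2 / β) := by positivity
        field_simp

/-- Corollary 4. -/
theorem statement7
    (ν : Measure ℝ) [SigmaFinite ν]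
    (hint : ∫⁻ x in Ioi (0:ℝ), ENNReal.ofReal (min 1 (x ^ 2)) ∂ν ≠ ⊤)
    (σ b : ℝ) (hσ : 0 ≤ σ)
    (φ φ' φ'' : ℝ → ℝ)
    (hφ : ∀ l : ℝ, 0 ≤ l → φ l = σ ^ 2 * l ^ 2 - b * l +
      ∫ x in Ioi (0:ℝ), (Real.exp (-(l * x)) - 1 + l * x * (if x < 1 then 1 else 0)) ∂ν)
    (hD1 : ∀ x : ℝ, 0 < x → HasDerivAt φ (φ' x) x)
    (hD2 : ∀ x : ℝ, 0 < x → HasDerivAt φ' (φ'' x) x)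
    (hφ'' : ∀ l : ℝ, 0 < l → φ'' l = 2 * σ ^ 2 + ∫ x in Ioi (0:ℝ), x ^ 2 * Real.exp (-(l * x)) ∂ν)
    (α c x₀ : ℝ) (hα : 0 < α) (hc : c ∈ Ioc (0:ℝ) 1) (hx₀ : 0 ≤ x₀)
    (hscal : WLSC φ'' (α - 2) c x₀) :
    (∃ c₁ : ℝ, c₁ ∈ Ioc (0:ℝ) 1 ∧ ∀ x : ℝ, x₀ < x →
      c₁ * (x ^ 2 * φ'' x) ≤ pruittK σ ν x⁻¹) ∧
    (∀ x : ℝ, 0 < x → pruittK σ ν x⁻¹ ≤ Real.exp 1 * (x ^ 2 * φ'' x)) := by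
  have H := statement7' ν hint σ b hσ φ φ' φ'' hφ hD1 hD2 hφ'' α c x₀ hα hc hx₀ hscal
  simp only [pruittK]
  exact H

end
end
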